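/- arXiv:1711.01982 — 7 statements merged into one kernel-verified Lean document; each statement's English description precedes it below -/
import Mathlib

section
/- For matrices A ∈ C^{M×N1} with full column rank, B ∈ C^{M×N2}, and a Hermitian matrix R ∈ C^{M×M}, the trace identity tr(P_{[A,B]}^⊥ R) = tr(P_A^⊥ R) - tr(P_{P_A^⊥ B} R) holds, where [A,B] denotes the horizontal concatenation (assumed to have full column rank), with the convention that tr(P_{P_A^⊥ B} R) = 0 if P_A^⊥ B = 0. -/
open Matrix ComplexOrder

/-- Orthogonal projector onto the column space of `C` (formula `C (Cᴴ C)⁻¹ Cᴴ`). -/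
noncomputable def projCol {M N : ℕ} (C : Matrix (Fin M) (Fin N) ℂ) :
    Matrix (Fin M) (Fin M) ℂ :=
  C * (Cᴴ * C)⁻¹ * Cᴴ

lemma aux_isUnit_det {M : ℕ} {n : Type*} [Fintype n] [DecidableEq n]
    (X : Matrix (Fin M) n ℂ) (h : ∀ v, X *ᵥ v = 0 → v = 0) :
    IsUnit (Xᴴ * X).det := by
  rw [isUnit_iff_ne_zero]
  intro hdet
  obtain ⟨v, hv, hv0⟩ := Matrix.exists_mulVec_eq_zero_iff.mpr hdet
  exact hv (h v ((conjTranspose_mul_self_mulVec_eq_zero X v).mp hv0))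

lemma aux_inj {M : ℕ} {n : Type*} [Fintype n] [DecidableEq n]
    (X : Matrix (Fin M) n ℂ) (h : X.rank = Fintype.card n) :
    ∀ v, X *ᵥ v = 0 → v = 0 := by
  have hker : LinearMap.ker X.mulVecLin = ⊥ := by
    have h1 := LinearMap.finrank_range_add_finrank_ker X.mulVecLin
    rw [Module.finrank_pi ℂ] at h1
    rw [Matrix.rank] at h
    have h0 : Module.finrank ℂ (LinearMap.ker X.mulVecLin) = 0 := by omega
    exact Submodule.finrank_eq_zero.mp h0
  intro v hv
  have hmem : v ∈ LinearMap.ker X.mulVecLin := by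
    simpa [LinearMap.mem_ker, Matrix.mulVecLin_apply] using hv
  simpa [hker] using hmem

theorem stmt3 {M N1 N2 : ℕ} (A : Matrix (Fin M) (Fin N1) ℂ)
    (B : Matrix (Fin M) (Fin N2) ℂ) (hA : A.rank = N1)
    (hAB : (Matrix.fromCols A B).rank = N1 + N2)
    (R : Matrix (Fin M) (Fin M) ℂ) (hR : R.IsHermitian) :
    (((1 - (Matrix.fromCols A B) *
        (((Matrix.fromCols A B)ᴴ * (Matrix.fromCols A B))⁻¹) *
        (Matrix.fromCols A B)ᴴ) * R).trace) =
      ((1 - projCol A) * R).trace -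
        (if (1 - projCol A) * B = 0 then 0
         else (projCol ((1 - projCol A) * B) * R).trace) := by
  classical
  set E : Matrix (Fin M) (Fin N2) ℂ := (1 - projCol A) * B with hEdef
  -- invertibility of AᴴA
  have hAinj : ∀ v, A *ᵥ v = 0 → v = 0 := aux_inj A (by simpa using hA)
  have hgdet : IsUnit (Aᴴ * A).det := aux_isUnit_det A hAinj
  haveI : Invertible (Aᴴ * A) := invertibleOfIsUnitDet _ hgdet
  have hginv : ((Aᴴ * A)⁻¹)ᴴ = (Aᴴ * A)⁻¹ := by
    rw [conjTranspose_nonsing_inv, conjTranspose_mul, conjTranspose_conjTranspose]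
  have hgl : (Aᴴ * A)⁻¹ * (Aᴴ * A) = 1 := nonsing_inv_mul _ hgdet
  have hgr : (Aᴴ * A) * (Aᴴ * A)⁻¹ = 1 := mul_nonsing_inv _ hgdet
  -- injectivity of fromCols A B
  have hCinj : ∀ v, (Matrix.fromCols A B) *ᵥ v = 0 → v = 0 :=
    aux_inj _ (by simpa using hAB)
  have hPB : projCol A * B = A * ((Aᴴ * A)⁻¹ * (Aᴴ * B)) := by
    simp [projCol, Matrix.mul_assoc]
  -- injectivity of E
  have hEinj : ∀ v, E *ᵥ v = 0 → v = 0 := by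
    intro x hx
    set y : Fin N1 → ℂ := ((Aᴴ * A)⁻¹ * (Aᴴ * B)) *ᵥ x with hy
    have hx' : B *ᵥ x = A *ᵥ y := by
      have h1 : ((1 - projCol A) * B) *ᵥ x = 0 := hx
      rw [Matrix.sub_mul, Matrix.one_mul, sub_mulVec, sub_eq_zero] at h1
      rw [h1, hPB, hy, ← mulVec_mulVec, ← Matrix.mul_assoc]
    have key : Matrix.fromCols A B *ᵥ Sum.elim y (-x) = 0 := by
      rw [fromCols_mulVec_sumElim, mulVec_neg, hx']
      abel
    have h0 := hCinj _ key
    funext i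
    have h2 := congrFun h0 (Sum.inr i)
    simpa [neg_eq_zero] using h2
  have hSdet : IsUnit (Eᴴ * E).det := aux_isUnit_det E hEinj
  haveI : Invertible (Eᴴ * E) := invertibleOfIsUnitDet _ hSdet
  -- conjTranspose facts
  have hPh : (projCol A)ᴴ = projCol A := by
    simp [projCol, conjTranspose_mul, hginv, Matrix.mul_assoc]
  have hEh : Eᴴ = Bᴴ * (1 - projCol A) := by
    rw [hEdef, conjTranspose_mul, conjTranspose_sub, conjTranspose_one, hPh]
  -- Schur complement equals Eᴴ E
  have hSchur : Bᴴ * B - Bᴴ * A * ⅟(Aᴴ * A) * (Aᴴ * B) = Eᴴ * E := by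
    rw [invOf_eq_nonsing_inv]
    have hEexp : E = B - A * ((Aᴴ * A)⁻¹ * (Aᴴ * B)) := by
      rw [hEdef, Matrix.sub_mul, Matrix.one_mul, hPB]
    rw [hEexp]
    simp only [conjTranspose_sub, conjTranspose_mul, hginv, conjTranspose_conjTranspose]
    simp only [Matrix.sub_mul, Matrix.mul_sub]
    simp only [Matrix.mul_assoc]
    have hcanc : Aᴴ * (A * ((Aᴴ * A)⁻¹ * (Aᴴ * B))) = Aᴴ * B := by
      rw [← Matrix.mul_assoc, ← Matrix.mul_assoc, hgr, Matrix.one_mul]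
    simp only [hcanc]
    abel
  haveI hSchurInv : Invertible (Bᴴ * B - Bᴴ * A * ⅟(Aᴴ * A) * (Aᴴ * B)) := by
    rw [hSchur]; infer_instance
  -- Gram matrix as a block matrix
  have hCt : (Matrix.fromCols A B)ᴴ = fromRows Aᴴ Bᴴ :=
    conjTranspose_fromCols_eq_fromRows_conjTranspose A B
  have hG : (Matrix.fromCols A B)ᴴ * Matrix.fromCols A B
      = fromBlocks (Aᴴ * A) (Aᴴ * B) (Bᴴ * A) (Bᴴ * B) := by
    rw [hCt, fromRows_mul_fromCols]
  haveI hBlockInv : Invertible (fromBlocks (Aᴴ * A) (Aᴴ * B) (Bᴴ * A) (Bᴴ * B)) :=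
    fromBlocks₁₁Invertible _ _ _ _
  -- main projector decomposition
  have key : Matrix.fromCols A B *
      (((Matrix.fromCols A B)ᴴ * Matrix.fromCols A B)⁻¹) * (Matrix.fromCols A B)ᴴ
      = projCol A + E * (Eᴴ * E)⁻¹ * Eᴴ := by
    have h1 : ⅟(Bᴴ * B - Bᴴ * A * ⅟(Aᴴ * A) * (Aᴴ * B)) = (Eᴴ * E)⁻¹ := by
      rw [invOf_eq_nonsing_inv, hSchur]
    have h2 : ⅟(Aᴴ * A) = (Aᴴ * A)⁻¹ := invOf_eq_nonsing_inv _
    have hinv : ((Matrix.fromCols A B)ᴴ * Matrix.fromCols A B)⁻¹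
        = fromBlocks
            ((Aᴴ * A)⁻¹ + (Aᴴ * A)⁻¹ * (Aᴴ * B) * (Eᴴ * E)⁻¹ * (Bᴴ * A) * (Aᴴ * A)⁻¹)
            (-((Aᴴ * A)⁻¹ * (Aᴴ * B) * (Eᴴ * E)⁻¹))
            (-((Eᴴ * E)⁻¹ * (Bᴴ * A) * (Aᴴ * A)⁻¹))
            ((Eᴴ * E)⁻¹) := by
      rw [hG, ← invOf_eq_nonsing_inv, invOf_fromBlocks₁₁_eq, h1, h2]
    obtain ⟨s, hs⟩ : ∃ s, (Eᴴ * E)⁻¹ = s := ⟨_, rfl⟩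
    rw [hinv, hCt, fromCols_mul_fromBlocks, fromCols_mul_fromRows, hs, hEh, hEdef]
    simp only [projCol, Matrix.mul_add, Matrix.add_mul, Matrix.mul_sub, Matrix.sub_mul,
      Matrix.mul_neg, Matrix.neg_mul, Matrix.one_mul, Matrix.mul_one, Matrix.mul_assoc]
    abel
  rw [key]
  have hsplit : (1 - (projCol A + E * (Eᴴ * E)⁻¹ * Eᴴ)) * R
      = (1 - projCol A) * R - (E * (Eᴴ * E)⁻¹ * Eᴴ) * R := by
    noncomm_ring
  rw [hsplit, trace_sub]
  congr 1
  by_cases h0 : E = 0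
  · rw [if_pos h0, h0]
    simp
  · rw [if_neg h0]
    rfl
end

section
/- Let D = diag(d_1,...,d_K) be a real diagonal matrix with distinct entries, ρ > 0, and z ∈ C^K with all entries nonzero. Then x ∈ R is an eigenvalue of D - ρ z z^H if and only if x is not equal to any d_k and p(x) = 1 - ρ Σ_{k=1}^K |z_k|²/(d_k - x) = 0. -/
open Matrix ComplexOrder

theorem stmt6 {K : ℕ} (d : Fin K → ℝ) (hd : Function.Injective d) (ρ : ℝ) (hρ : 0 < ρ)
    (z : Fin K → ℂ) (hz : ∀ k, z k ≠ 0) (x : ℝ) :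
    (x : ℂ) ∈ spectrum ℂ
        (Matrix.diagonal (fun i => (d i : ℂ)) - (ρ : ℂ) • Matrix.vecMulVec z (star z)) ↔
      (∀ k, x ≠ d k) ∧ 1 - ρ * ∑ k, ‖z k‖ ^ 2 / (d k - x) = 0 := by
  set A := Matrix.diagonal (fun i => (d i : ℂ)) - (ρ : ℂ) • Matrix.vecMulVec z (star z) with hA
  have hnz : ∀ j, ((‖z j‖ : ℂ))^2 = (starRingEnd ℂ) (z j) * z j := fun j => by
    rw [← Complex.ofReal_pow, ← Complex.normSq_eq_conj_mul_self, Complex.normSq_eq_norm_sq]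
  have hmul : ∀ v : Fin K → ℂ, ∀ i, A.mulVec v i
      = (d i : ℂ) * v i - (ρ:ℂ) * (z i * ∑ j, (starRingEnd ℂ) (z j) * v j) := by
    intro v i
    have h1 : (Matrix.diagonal (fun i => (d i : ℂ))).mulVec v i = (d i : ℂ) * v i :=
      Matrix.mulVec_diagonal _ _ _
    have h2 : ((ρ:ℂ) • Matrix.vecMulVec z (star z)).mulVec v i
        = (ρ:ℂ) * (z i * ∑ j, (starRingEnd ℂ) (z j) * v j) := by
      rw [Matrix.smul_mulVec]
      simp [Matrix.mulVec, dotProduct, Matrix.vecMulVec_apply, Finset.mul_sum, mul_assoc]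
    rw [hA, Matrix.sub_mulVec, Pi.sub_apply, h1, h2]
  have hmem : (x:ℂ) ∈ spectrum ℂ A ↔ ∃ v, v ≠ 0 ∧ A.mulVec v = (x:ℂ) • v := by
    rw [spectrum.mem_iff, Algebra.algebraMap_eq_smul_one, Matrix.isUnit_iff_isUnit_det,
      isUnit_iff_ne_zero, not_not, ← Matrix.exists_mulVec_eq_zero_iff]
    constructor
    · rintro ⟨v, hv, h⟩
      refine ⟨v, hv, ?_⟩
      rw [Matrix.sub_mulVec, Matrix.smul_mulVec, Matrix.one_mulVec, sub_eq_zero] at h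
      exact h.symm
    · rintro ⟨v, hv, h⟩
      refine ⟨v, hv, ?_⟩
      rw [Matrix.sub_mulVec, Matrix.smul_mulVec, Matrix.one_mulVec, sub_eq_zero, h]
  rw [hmem]
  constructor
  · rintro ⟨v, hv, hAv⟩
    set c : ℂ := ∑ j, (starRingEnd ℂ) (z j) * v j with hc
    have eq1 : ∀ i, ((d i : ℂ) - x) * v i = (ρ:ℂ) * c * z i := by
      intro i
      have h := congrFun hAv i
      rw [hmul v i] at h
      simp only [Pi.smul_apply, smul_eq_mul] at h
      linear_combination h
    have hne : ∀ k, x ≠ d k := by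
      intro j hxj
      have hc0 : c = 0 := by
        have h0 : (ρ:ℂ) * c * z j = 0 := by
          rw [← eq1 j, hxj]; ring
        rcases mul_eq_zero.1 h0 with h | h
        · rcases mul_eq_zero.1 h with h' | h'
          · exact absurd h' (Complex.ofReal_ne_zero.2 hρ.ne')
          · exact h'
        · exact absurd h (hz j)
      have hvi : ∀ i, i ≠ j → v i = 0 := by
        intro i hij
        have h := eq1 i
        rw [hc0, mul_zero, zero_mul] at h
        have hdne : ((d i : ℂ) - x) ≠ 0 := by
          rw [sub_ne_zero]
          intro h'
          exact hij (hd (by rw [show (d i : ℝ) = x by exact_mod_cast h', ← hxj]))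
        exact (mul_eq_zero.1 h).resolve_left hdne
      have hcj : c = (starRingEnd ℂ) (z j) * v j := by
        rw [hc]
        exact Finset.sum_eq_single j (fun i _ hij => by rw [hvi i hij, mul_zero])
          (fun h => absurd (Finset.mem_univ j) h)
      have hvj : v j = 0 := by
        rcases mul_eq_zero.1 (hcj.symm.trans hc0) with h | h
        · exact absurd h (by simpa using hz j)
        · exact h
      exact hv (funext fun i => by rcases eq_or_ne i j with rfl | h
                                   · exact hvj
                                   · exact hvi i h)
    have hdne : ∀ i, ((d i : ℂ) - x) ≠ 0 := by
      intro i
      rw [sub_ne_zero]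
      intro h
      exact hne i (by exact_mod_cast h.symm)
    have hcne : c ≠ 0 := by
      intro hc0
      apply hv
      funext i
      have h := eq1 i
      rw [hc0, mul_zero, zero_mul] at h
      exact (mul_eq_zero.1 h).resolve_left (hdne i)
    have hvform : ∀ i, v i = (ρ:ℂ) * c * z i / ((d i : ℂ) - x) := by
      intro i
      rw [eq_div_iff (hdne i), mul_comm (v i)]
      exact eq1 i
    have hsum : c = (ρ:ℂ) * c * ∑ i, ((‖z i‖:ℂ))^2 / ((d i : ℂ) - x) := by
      conv_lhs => rw [hc]
      rw [Finset.mul_sum]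
      refine Finset.sum_congr rfl fun i _ => ?_
      rw [hvform i]
      calc (starRingEnd ℂ) (z i) * ((ρ:ℂ) * c * z i / ((d i : ℂ) - x))
          = (ρ:ℂ) * c * (((starRingEnd ℂ) (z i) * z i) / ((d i : ℂ) - x)) := by ring
        _ = (ρ:ℂ) * c * (((‖z i‖:ℂ))^2 / ((d i : ℂ) - x)) := by rw [hnz i]
    have hsec : (1:ℂ) - (ρ:ℂ) * ∑ i, ((‖z i‖:ℂ))^2 / ((d i : ℂ) - x) = 0 := by
      have h2 : c * (1 - (ρ:ℂ) * ∑ i, ((‖z i‖:ℂ))^2 / ((d i : ℂ) - x)) = 0 := by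
        rw [mul_sub, mul_one]
        rw [← mul_assoc, mul_comm c]
        rw [← sub_eq_zero] at hsum ⊢
        linear_combination hsum
      exact (mul_eq_zero.1 h2).resolve_left hcne
    refine ⟨hne, ?_⟩
    have hcast : ((1 - ρ * ∑ k, ‖z k‖ ^ 2 / (d k - x) : ℝ) : ℂ)
        = 1 - (ρ:ℂ) * ∑ i, ((‖z i‖:ℂ))^2 / ((d i : ℂ) - x) := by
      push_cast
      ring
    exact_mod_cast hcast ▸ hsec
  · rintro ⟨hne, hsec⟩
    have hdne : ∀ i, ((d i : ℂ) - x) ≠ 0 := by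
      intro i
      rw [sub_ne_zero]
      intro h
      exact hne i (by exact_mod_cast h.symm)
    have hK : 0 < K := by
      by_contra h
      push_neg at h
      interval_cases K
      simp at hsec
    refine ⟨fun i => z i / ((d i : ℂ) - x), ?_, ?_⟩
    · intro h
      have h0 := congrFun h ⟨0, hK⟩
      simp only [Pi.zero_apply, div_eq_zero_iff] at h0
      rcases h0 with h1 | h1
      · exact hz _ h1
      · exact hdne _ h1
    · funext i
      rw [hmul]
      have hcast : ((1 - ρ * ∑ k, ‖z k‖ ^ 2 / (d k - x) : ℝ) : ℂ)
          = 1 - (ρ:ℂ) * ∑ j, ((‖z j‖:ℂ))^2 / ((d j : ℂ) - x) := by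
        push_cast
        ring
      have hsecC : (ρ:ℂ) * ∑ j, ((‖z j‖:ℂ))^2 / ((d j : ℂ) - x) = 1 := by
        have h0 : ((1 - ρ * ∑ k, ‖z k‖ ^ 2 / (d k - x) : ℝ) : ℂ) = 0 := by
          rw [hsec]; norm_num
        rw [hcast] at h0
        linear_combination -h0
      have hcsum : ∑ j, (starRingEnd ℂ) (z j) * (z j / ((d j : ℂ) - x))
          = ∑ j, ((‖z j‖:ℂ))^2 / ((d j : ℂ) - x) := by
        refine Finset.sum_congr rfl fun j _ => ?_
        rw [← mul_div_assoc, hnz j]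
      rw [hcsum]
      have hz1 : (ρ:ℂ) * (z i * ∑ j, ((‖z j‖:ℂ))^2 / ((d j : ℂ) - x)) = z i := by
        rw [mul_comm (z i), ← mul_assoc, hsecC, one_mul]
      rw [hz1]
      simp only [Pi.smul_apply, smul_eq_mul]
      field_simp [hdne i]
      ring
end

section
/- Let D = diag(d_1,...,d_K) be real diagonal with distinct entries, ρ > 0, z ∈ C^K with all entries nonzero, and let d̄ be an eigenvalue of D - ρ z z^H. Then the vector u = (D - d̄ I_K)^{-1} z is an eigenvector of D - ρ z z^H associated with d̄. -/
open Matrix ComplexOrder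

theorem stmt7 {K : ℕ} (d : Fin K → ℝ) (hd : Function.Injective d) (ρ : ℝ) (hρ : 0 < ρ)
    (z : Fin K → ℂ) (hz : ∀ k, z k ≠ 0) (μ : ℝ)
    (hμ : (μ : ℂ) ∈ spectrum ℂ
      (Matrix.diagonal (fun i => (d i : ℂ)) - (ρ : ℂ) • Matrix.vecMulVec z (star z))) :
    let u : Fin K → ℂ :=
      (Matrix.diagonal (fun i => (d i : ℂ)) - (μ : ℂ) • (1 : Matrix (Fin K) (Fin K) ℂ))⁻¹ *ᵥ z
    u ≠ 0 ∧
      (Matrix.diagonal (fun i => (d i : ℂ)) - (ρ : ℂ) • Matrix.vecMulVec z (star z)) *ᵥ u =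
        (μ : ℂ) • u := by
  intro u
  set A := Matrix.diagonal (fun i => (d i : ℂ)) - (ρ : ℂ) • Matrix.vecMulVec z (star z) with hA
  set B := Matrix.diagonal (fun i => (d i : ℂ)) - (μ : ℂ) • (1 : Matrix (Fin K) (Fin K) ℂ)
    with hBdef
  have hu : u = B⁻¹ *ᵥ z := rfl
  rw [spectrum.mem_iff] at hμ
  have hdet : ((algebraMap ℂ (Matrix (Fin K) (Fin K) ℂ)) (μ : ℂ) - A).det = 0 := by
    by_contra h
    exact hμ ((Matrix.isUnit_iff_isUnit_det _).2 (isUnit_iff_ne_zero.2 h))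
  obtain ⟨v, hv0, hv⟩ := (Matrix.exists_mulVec_eq_zero_iff).2 hdet
  have hAv : A *ᵥ v = (μ : ℂ) • v := by
    rw [Matrix.sub_mulVec, Algebra.algebraMap_eq_smul_one, Matrix.smul_mulVec,
      Matrix.one_mulVec] at hv
    exact (sub_eq_zero.mp hv).symm
  set c : ℂ := star z ⬝ᵥ v with hc
  have hvm : ∀ i, (Matrix.vecMulVec z (star z) *ᵥ v) i = c * z i := by
    intro i
    simp only [Matrix.mulVec, Matrix.vecMulVec_apply, dotProduct, hc, Finset.sum_mul]
    apply Finset.sum_congr rfl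
    intro j _
    simp [Pi.star_apply]
    ring
  have key : ∀ i, (d i : ℂ) * v i - (ρ : ℂ) * c * z i = (μ : ℂ) * v i := by
    intro i
    have := congrFun hAv i
    simp only [hA, Matrix.sub_mulVec, Matrix.smul_mulVec, Pi.sub_apply, Pi.smul_apply,
      Matrix.mulVec_diagonal, smul_eq_mul] at this
    rw [hvm i] at this
    rw [← this]
    ring
  have hρ0 : (ρ : ℂ) ≠ 0 := by
    exact_mod_cast ne_of_gt hρ
  -- μ differs from all d k
  have hne : ∀ k, (μ : ℂ) ≠ (d k : ℂ) := by
    intro k hk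
    have hkk := key k
    rw [← hk] at hkk
    have hc0 : c = 0 := by
      have : (ρ : ℂ) * c * z k = 0 := by linear_combination -hkk
      rcases mul_eq_zero.mp this with h | h
      · rcases mul_eq_zero.mp h with h' | h'
        · exact absurd h' hρ0
        · exact h'
      · exact absurd h (hz k)
    have haux : ∀ i, i ≠ k → v i = 0 := by
      intro i hik
      have hki := key i
      rw [hc0] at hki
      have : ((d i : ℂ) - (μ : ℂ)) * v i = 0 := by linear_combination hki
      rcases mul_eq_zero.mp this with h | h
      · exfalso
        apply hik (hd ?_)
        have : (d i : ℂ) = (d k : ℂ) := by rw [hk] at h; linear_combination h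
        exact_mod_cast this
      · exact h
    have hvk : v k = 0 := by
      have hcs : c = star (z k) * v k := by
        rw [hc]
        rw [dotProduct]
        rw [Finset.sum_eq_single k]
        · rfl
        · intro j _ hj
          rw [haux j hj]; ring
        · intro h; exact absurd (Finset.mem_univ k) h
      rw [hc0] at hcs
      rcases mul_eq_zero.mp hcs.symm with h | h
      · exact absurd h (star_ne_zero.mpr (hz k))
      · exact h
    apply hv0
    funext i
    by_cases hik : i = k
    · rw [hik]; exact hvk
    · exact haux i hik
  -- B is invertible
  have hBd : B = Matrix.diagonal (fun i => (d i : ℂ) - (μ : ℂ)) := by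
    rw [hBdef]
    ext i j
    by_cases h : i = j
    · subst h; simp [Matrix.diagonal_apply_eq, Matrix.one_apply_eq]
    · simp [Matrix.diagonal_apply_ne _ h, Matrix.one_apply_ne h]
  have hBdetU : IsUnit B.det := by
    rw [hBd, Matrix.det_diagonal]
    apply isUnit_iff_ne_zero.2
    apply Finset.prod_ne_zero_iff.2
    intro i _
    intro h
    exact hne i (by linear_combination -h)
  have hBinv : B⁻¹ * B = 1 := Matrix.nonsing_inv_mul _ hBdetU
  have hBv : B *ᵥ v = ((ρ : ℂ) * c) • z := by
    funext i
    have := key i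
    rw [hBd]
    simp only [Matrix.mulVec_diagonal, Pi.smul_apply, smul_eq_mul]
    linear_combination this
  have hvu : v = ((ρ : ℂ) * c) • u := by
    calc v = (B⁻¹ * B) *ᵥ v := by rw [hBinv, Matrix.one_mulVec]
    _ = B⁻¹ *ᵥ (B *ᵥ v) := by rw [← Matrix.mulVec_mulVec]
    _ = B⁻¹ *ᵥ (((ρ : ℂ) * c) • z) := by rw [hBv]
    _ = ((ρ : ℂ) * c) • u := by rw [Matrix.mulVec_smul, hu]
  have hρc : (ρ : ℂ) * c ≠ 0 := by
    intro h
    rw [h, zero_smul] at hvu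
    exact hv0 hvu
  have huv : u = ((ρ : ℂ) * c)⁻¹ • v := by
    rw [hvu, smul_smul, inv_mul_cancel₀ hρc, one_smul]
  constructor
  · intro h
    rw [h, smul_zero] at hvu
    exact hv0 hvu
  · rw [huv, Matrix.mulVec_smul, hAv, smul_comm]
end

section
/- Let R be an M×M Hermitian positive definite matrix and a ∈ C^M nonzero. Set σ̂² = 1/(a^H R^{-1} a) (the Capon power). Then R - σ̂² a a^H is positive semidefinite and singular, and for any σ² > σ̂², the matrix R - σ² a a^H is not positive semidefinite. -/
open Matrix ComplexOrder

private lemma vecMulVec_mulVec' {M : ℕ} (a x : Fin M → ℂ) :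
    Matrix.vecMulVec a (star a) *ᵥ x = (star a ⬝ᵥ x) • a := by
  funext i
  simp only [Matrix.mulVec, Matrix.vecMulVec_apply, dotProduct, Pi.smul_apply,
    smul_eq_mul, Finset.sum_mul, Pi.star_apply, Finset.mul_sum]
  exact Finset.sum_congr rfl fun j _ => by ring

theorem stmt8 {M : ℕ} (R : Matrix (Fin M) (Fin M) ℂ) (hR : R.PosDef)
    (a : Fin M → ℂ) (ha : a ≠ 0) (t : ℝ)
    (ht : (t : ℂ) * (star a ⬝ᵥ (R⁻¹ *ᵥ a)) = 1) :
    (R - (t : ℂ) • Matrix.vecMulVec a (star a)).PosSemidef ∧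
      (R - (t : ℂ) • Matrix.vecMulVec a (star a)).det = 0 ∧
      ∀ σ : ℝ, t < σ →
        ¬ (R - (σ : ℂ) • Matrix.vecMulVec a (star a)).PosSemidef := by
  classical
  set u : Fin M → ℂ := R⁻¹ *ᵥ a with hu
  set q : ℂ := star a ⬝ᵥ u with hq
  have hdet : IsUnit R.det := hR.isUnit.map (Matrix.detMonoidHom)
  have hRu : R *ᵥ u = a := by
    rw [hu, Matrix.mulVec_mulVec, Matrix.mul_nonsing_inv _ hdet, Matrix.one_mulVec]
  have hHerm : R.IsHermitian := hR.1
  -- star u ᵥ* R = star a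
  have hstarR : star u ᵥ* R = star a := by
    have := Matrix.star_mulVec R u
    rw [hHerm.eq] at this
    rw [← this, hRu]
  have huRx : ∀ x, star u ⬝ᵥ (R *ᵥ x) = star a ⬝ᵥ x := by
    intro x
    rw [Matrix.dotProduct_mulVec, hstarR]
  -- q is real and positive
  have hq_pos : 0 < q := by
    have hu0 : u ≠ 0 := by
      intro h
      apply ha
      rw [← hRu, h, Matrix.mulVec_zero]
    have hinv : (R⁻¹).PosDef := hR.inv
    have := hinv.dotProduct_mulVec_pos hu0
    -- star u ⬝ᵥ (R⁻¹ *ᵥ u) ... need relate to q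
    -- q = star a ⬝ᵥ (R⁻¹ *ᵥ a); a = R *ᵥ u
    have : 0 < star a ⬝ᵥ (R⁻¹ *ᵥ a) := hinv.dotProduct_mulVec_pos ha
    exact this
  have htq : (t : ℂ) * q = 1 := ht
  have ht0 : (t : ℂ) ≠ 0 := by
    intro h
    rw [h, zero_mul] at htq
    exact one_ne_zero htq.symm
  have hq_eq : q = ((t : ℂ))⁻¹ := (inv_eq_of_mul_eq_one_right htq).symm
  have ht_pos : 0 < t := by
    have h1 : (0 : ℂ) < ((t : ℂ))⁻¹ := hq_eq ▸ hq_pos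
    have h2 : 0 < t⁻¹ := by
      rw [← Complex.ofReal_inv] at h1
      exact_mod_cast (Complex.zero_lt_real).mp h1
    exact inv_pos.mp h2
  have hqr : q = ((t⁻¹ : ℝ) : ℂ) := by rw [hq_eq, Complex.ofReal_inv]
  have hstar_ua : star u ⬝ᵥ a = q := by
    have : star u ⬝ᵥ a = star u ⬝ᵥ (R *ᵥ u) := by rw [hRu]
    rw [this, huRx u, ← hq]
  -- key quadratic form computation for general real s
  have key : ∀ (s : ℝ) (x : Fin M → ℂ),
      star x ⬝ᵥ ((R - (s : ℂ) • Matrix.vecMulVec a (star a)) *ᵥ x)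
        = star x ⬝ᵥ (R *ᵥ x) - (s : ℂ) * ((star a ⬝ᵥ x) * star (star a ⬝ᵥ x)) := by
    intro s x
    rw [Matrix.sub_mulVec, dotProduct_sub, Matrix.smul_mulVec,
      vecMulVec_mulVec', dotProduct_smul, dotProduct_smul]
    have hsx : star x ⬝ᵥ a = star (star a ⬝ᵥ x) := by
      rw [← Matrix.star_dotProduct_star, star_star]
    rw [hsx]
    simp only [smul_eq_mul]
    try ring
  -- the completed-square identity
  have square : ∀ x : Fin M → ℂ,
      star x ⬝ᵥ ((R - (t : ℂ) • Matrix.vecMulVec a (star a)) *ᵥ x)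
        = star (x - ((t : ℂ) * (star a ⬝ᵥ x)) • u) ⬝ᵥ
            (R *ᵥ (x - ((t : ℂ) * (star a ⬝ᵥ x)) • u)) := by
    intro x
    set c : ℂ := star a ⬝ᵥ x with hc
    set s : ℂ := (t : ℂ) * c with hs
    have hqq : star q = q := by
      rw [hqr, Complex.star_def, Complex.conj_ofReal]
    have e1 : star x ⬝ᵥ (R *ᵥ u) = star c := by
      rw [hRu, ← Matrix.star_dotProduct_star, star_star]
    have e2 : star u ⬝ᵥ (R *ᵥ x) = c := huRx x
    have e3 : star u ⬝ᵥ (R *ᵥ u) = q := by rw [hRu, hstar_ua]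
    have expand : star (x - s • u) ⬝ᵥ (R *ᵥ (x - s • u))
        = star x ⬝ᵥ (R *ᵥ x) - s * star c - star s * c + s * star s * q := by
      rw [Matrix.mulVec_sub, star_sub, sub_dotProduct, dotProduct_sub,
        dotProduct_sub, Matrix.mulVec_smul, star_smul,
        dotProduct_smul, smul_dotProduct, smul_dotProduct,
        dotProduct_smul, e1, e2, e3]
      simp only [smul_eq_mul]
      ring
    rw [key t x, expand, hs]
    have hstars : star ((t : ℂ) * c) = (t : ℂ) * star c := by
      rw [star_mul']
      congr 1
      rw [Complex.star_def, Complex.conj_ofReal]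
    rw [hstars]
    have : (t : ℂ) * c * ((t : ℂ) * star c) * q
        = c * star c * (t : ℂ) * ((t : ℂ) * q) := by ring
    rw [this, htq]
    ring
  -- zero eigenvector
  have hker : (R - (t : ℂ) • Matrix.vecMulVec a (star a)) *ᵥ u = 0 := by
    rw [Matrix.sub_mulVec, hRu, Matrix.smul_mulVec, vecMulVec_mulVec', ← hq]
    funext i
    simp only [Pi.sub_apply, Pi.smul_apply, Pi.zero_apply, smul_eq_mul]
    have : (t : ℂ) * (q * a i) = ((t : ℂ) * q) * a i := by ring
    rw [this, htq, one_mul, sub_self]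
  have hu0 : u ≠ 0 := by
    intro h
    apply ha
    rw [← hRu, h, Matrix.mulVec_zero]
  refine ⟨PosSemidef.of_dotProduct_mulVec_nonneg ?_ ?_, ?_, ?_⟩
  · -- Hermitian
    apply Matrix.IsHermitian.sub hHerm
    rw [Matrix.IsHermitian]
    rw [Matrix.conjTranspose_smul]
    congr 1
    · rw [Complex.star_def, Complex.conj_ofReal]
    · ext i j
      simp [Matrix.conjTranspose_apply, Matrix.vecMulVec_apply, mul_comm]
  · -- nonneg quadratic form
    intro x
    rw [square x]
    exact hR.posSemidef.dotProduct_mulVec_nonneg _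
  · -- det = 0
    by_contra h
    exact hu0 (Matrix.eq_zero_of_mulVec_eq_zero h hker)
  · -- strict failure for σ > t
    intro σ hσ hPSD
    have := hPSD.dotProduct_mulVec_nonneg u
    have hqq : star q = q := by rw [hqr, Complex.star_def, Complex.conj_ofReal]
    rw [key σ u, hRu, hstar_ua, ← hq, hqq, hqr] at this
    have hval : ((t⁻¹ : ℝ) : ℂ) - (σ : ℂ) * (((t⁻¹ : ℝ) : ℂ) * ((t⁻¹ : ℝ) : ℂ))
        = ((t⁻¹ - σ * (t⁻¹ * t⁻¹) : ℝ) : ℂ) := by push_cast; ring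
    rw [hval, Complex.zero_le_real] at this
    have hneg : t⁻¹ - σ * (t⁻¹ * t⁻¹) < 0 := by
      have h1 : t⁻¹ * t⁻¹ > 0 := by positivity
      have : t⁻¹ - σ * (t⁻¹ * t⁻¹) = (t - σ) * (t⁻¹ * t⁻¹) := by
        field_simp
        try ring
      rw [this]
      exact mul_neg_of_neg_of_pos (by linarith) h1
    linarith
end

section
/- Let R ∈ C^{M×M} be Hermitian and E ∈ C^{M×T} with rank(E) ≤ N-1 < M. Then the minimum over all such E of ‖R - E E^H‖_F² equals Σ_{k=N}^{M} λ_k²(R) + Σ over indices k ≤ N-1 with λ_k(R) < 0 of λ_k²(R); in particular if the (N-1) largest eigenvalues of R are nonnegative, the minimum is Σ_{k=N}^{M} λ_k²(R), attained when E E^H equals the truncated spectral decomposition using the (N-1) largest eigenpairs. -/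
open Matrix ComplexOrder

/-- Descending (k-th largest) eigenvalue of a Hermitian complex matrix. -/
noncomputable def eigDesc {n : ℕ} (A : Matrix (Fin n) (Fin n) ℂ) (k : Fin n) : ℝ :=
  if h : A.IsHermitian then (h.eigenvalues ∘ Tuple.sort h.eigenvalues) k.rev else 0

namespace EY

open Finset Complex Submodule Module

variable {M : ℕ}

lemma sum_dotProduct' (s : Finset (Fin M)) (f : Fin M → Fin M → ℂ) (y : Fin M → ℂ) :
    (∑ j ∈ s, f j) ⬝ᵥ y = ∑ j ∈ s, f j ⬝ᵥ y := by
  simp [dotProduct, Finset.sum_mul]; rw [Finset.sum_comm]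

lemma dotProduct_sum' (s : Finset (Fin M)) (f : Fin M → Fin M → ℂ) (y : Fin M → ℂ) :
    y ⬝ᵥ (∑ j ∈ s, f j) = ∑ j ∈ s, y ⬝ᵥ f j := by
  simp [dotProduct, Finset.mul_sum]; rw [Finset.sum_comm]

/-- descending eigenvector family -/
noncomputable def vDesc {A : Matrix (Fin M) (Fin M) ℂ} (hA : A.IsHermitian) (k : Fin M) :
    Fin M → ℂ :=
  ⇑(hA.eigenvectorBasis (Tuple.sort hA.eigenvalues k.rev))

lemma eigDesc_eq {A : Matrix (Fin M) (Fin M) ℂ} (hA : A.IsHermitian) (k : Fin M) :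
    eigDesc A k = hA.eigenvalues (Tuple.sort hA.eigenvalues k.rev) := by
  simp [eigDesc, dif_pos hA]

lemma eigDesc_antitone {A : Matrix (Fin M) (Fin M) ℂ} (hA : A.IsHermitian) :
    Antitone (eigDesc A) := by
  intro k l hkl
  rw [eigDesc_eq hA, eigDesc_eq hA]
  exact Tuple.monotone_sort hA.eigenvalues (Fin.rev_le_rev.2 hkl)

lemma ortho_vDesc {A : Matrix (Fin M) (Fin M) ℂ} (hA : A.IsHermitian) (j k : Fin M) :
    star (vDesc hA j) ⬝ᵥ vDesc hA k = if j = k then 1 else 0 := by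
  have h := hA.eigenvectorBasis.orthonormal
  rw [orthonormal_iff_ite] at h
  have h2 := h (Tuple.sort hA.eigenvalues j.rev) (Tuple.sort hA.eigenvalues k.rev)
  rw [PiLp.inner_apply] at h2
  have h3 : ((Tuple.sort hA.eigenvalues) j.rev = (Tuple.sort hA.eigenvalues) k.rev) ↔ (j = k) := by
    rw [Equiv.apply_eq_iff_eq, Fin.rev_inj]
  simp only [h3] at h2
  simpa [vDesc, dotProduct, RCLike.inner_apply, mul_comm] using h2

lemma mulVec_vDesc {A : Matrix (Fin M) (Fin M) ℂ} (hA : A.IsHermitian) (k : Fin M) :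
    A *ᵥ vDesc hA k = (eigDesc A k : ℂ) • vDesc hA k := by
  rw [eigDesc_eq hA]
  have h := hA.mulVec_eigenvectorBasis (Tuple.sort hA.eigenvalues k.rev)
  rw [vDesc, h]
  ext i
  simp [Complex.real_smul]

/-- spectral decomposition, entrywise, in descending order -/
lemma spectral_entry {A : Matrix (Fin M) (Fin M) ℂ} (hA : A.IsHermitian) (i l : Fin M) :
    A i l = ∑ k, (eigDesc A k : ℂ) * (vDesc hA k i * (starRingEnd ℂ) (vDesc hA k l)) := by
  set U : Matrix (Fin M) (Fin M) ℂ := (hA.eigenvectorUnitary : Matrix (Fin M) (Fin M) ℂ) with hU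
  have hUapp : ∀ a b, U a b = hA.eigenvectorBasis b a := fun a b => rfl
  have step1 : A i l = ∑ p, (hA.eigenvalues p : ℂ) *
      (hA.eigenvectorBasis p i * (starRingEnd ℂ) (hA.eigenvectorBasis p l)) := by
    conv_lhs => rw [hA.spectral_theorem, Unitary.conjStarAlgAut_apply]
    rw [← hU, Matrix.mul_apply]
    refine Finset.sum_congr rfl fun p _ => ?_
    rw [Matrix.mul_diagonal, Matrix.star_apply, hUapp, hUapp]
    simp only [Function.comp_apply]
    have : (RCLike.ofReal (hA.eigenvalues p) : ℂ) = (hA.eigenvalues p : ℂ) := rfl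
    rw [this, show star (hA.eigenvectorBasis p l) = (starRingEnd ℂ) (hA.eigenvectorBasis p l)
      from rfl]
    ring
  rw [step1]
  refine (Fintype.sum_bijective (fun k : Fin M => Tuple.sort hA.eigenvalues k.rev)
    ((Equiv.bijective _).comp Fin.rev_bijective) _ _ fun k => ?_).symm
  rw [eigDesc_eq hA]
  rfl

lemma re_star_dot (x : Fin M → ℂ) :
    (star x ⬝ᵥ x).re = ∑ i, Complex.normSq (x i) := by
  rw [dotProduct, Complex.re_sum]
  refine Finset.sum_congr rfl fun i _ => ?_
  simp [Pi.star_apply, ← Complex.normSq_eq_conj_mul_self]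

lemma re_star_dot_nonneg (x : Fin M → ℂ) : 0 ≤ (star x ⬝ᵥ x).re := by
  rw [re_star_dot]
  exact Finset.sum_nonneg fun i _ => Complex.normSq_nonneg _

lemma re_star_dot_pos {x : Fin M → ℂ} (hx : x ≠ 0) : 0 < (star x ⬝ᵥ x).re := by
  rcases (re_star_dot_nonneg x).lt_or_eq with h | h
  · exact h
  · exfalso
    apply hx
    rw [re_star_dot] at h
    have := (Finset.sum_eq_zero_iff_of_nonneg
      (fun i _ => Complex.normSq_nonneg (x i))).1 h.symm
    funext i
    exact Complex.normSq_eq_zero.1 (this i (Finset.mem_univ i))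

lemma dot_expand {v : Fin M → Fin M → ℂ}
    (hv : ∀ j k, star (v j) ⬝ᵥ v k = if j = k then 1 else 0) (c e : Fin M → ℂ) :
    star (∑ j, c j • v j) ⬝ᵥ (∑ k, e k • v k) =
      ∑ j, (starRingEnd ℂ) (c j) * e j := by
  rw [star_sum]
  rw [show (∑ j, star (c j • v j)) = ∑ j, ((starRingEnd ℂ) (c j)) • star (v j) from
    Finset.sum_congr rfl fun j _ => by rw [star_smul]; rfl]
  rw [sum_dotProduct' Finset.univ (fun j => ((starRingEnd ℂ) (c j)) • star (v j)) _]
  refine Finset.sum_congr rfl fun j _ => ?_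
  rw [dotProduct_sum' Finset.univ (fun k => e k • v k) _]
  rw [Finset.sum_eq_single j]
  · rw [smul_dotProduct, dotProduct_smul, hv j j, if_pos rfl]
    simp [smul_eq_mul]
  · intro k _ hkj
    rw [smul_dotProduct, dotProduct_smul, hv j k, if_neg (Ne.symm hkj)]
    simp
  · simp

lemma norm2_expand {v : Fin M → Fin M → ℂ}
    (hv : ∀ j k, star (v j) ⬝ᵥ v k = if j = k then 1 else 0) (c : Fin M → ℂ) :
    (star (∑ j, c j • v j) ⬝ᵥ (∑ j, c j • v j)).re = ∑ j, Complex.normSq (c j) := by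
  rw [dot_expand hv c c, Complex.re_sum]
  refine Finset.sum_congr rfl fun j _ => ?_
  simp [← Complex.normSq_eq_conj_mul_self]

/-- Frobenius norm of an "eigen-combination" -/
lemma fro {v : Fin M → Fin M → ℂ}
    (hv : ∀ j k, star (v j) ⬝ᵥ v k = if j = k then 1 else 0) (e : Fin M → ℝ) :
    ∑ i, ∑ l, ‖∑ k, (e k : ℂ) * (v k i * (starRingEnd ℂ) (v k l))‖ ^ 2
      = ∑ k, (e k) ^ 2 := by
  have key : ∀ i, ∑ l, ‖∑ k, (e k : ℂ) * (v k i * (starRingEnd ℂ) (v k l))‖ ^ 2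
      = ∑ k, Complex.normSq ((e k : ℂ) * v k i) := by
    intro i
    set c : Fin M → ℂ := fun k => (starRingEnd ℂ) ((e k : ℂ) * v k i) with hc
    have hw : ∀ l, (∑ j, c j • v j) l
        = (starRingEnd ℂ) (∑ k, (e k : ℂ) * (v k i * (starRingEnd ℂ) (v k l))) := by
      intro l
      rw [map_sum]
      rw [Finset.sum_apply]
      refine Finset.sum_congr rfl fun k _ => ?_
      simp only [hc, Pi.smul_apply, smul_eq_mul, _root_.map_mul, Complex.conj_conj]
      ring
    calc ∑ l, ‖∑ k, (e k : ℂ) * (v k i * (starRingEnd ℂ) (v k l))‖ ^ 2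
        = ∑ l, Complex.normSq ((∑ j, c j • v j) l) := by
          refine Finset.sum_congr rfl fun l _ => ?_
          rw [hw l, Complex.normSq_conj, ← Complex.sq_norm]
      _ = (star (∑ j, c j • v j) ⬝ᵥ (∑ j, c j • v j)).re := (re_star_dot _).symm
      _ = ∑ j, Complex.normSq (c j) := norm2_expand hv c
      _ = ∑ k, Complex.normSq ((e k : ℂ) * v k i) := by
          refine Finset.sum_congr rfl fun k _ => ?_
          rw [hc, Complex.normSq_conj]
  calc ∑ i, ∑ l, ‖∑ k, (e k : ℂ) * (v k i * (starRingEnd ℂ) (v k l))‖ ^ 2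
      = ∑ i, ∑ k, Complex.normSq ((e k : ℂ) * v k i) :=
        Finset.sum_congr rfl fun i _ => key i
    _ = ∑ k, ∑ i, Complex.normSq (e k) * Complex.normSq (v k i) := by
        rw [Finset.sum_comm]
        exact Finset.sum_congr rfl fun k _ => Finset.sum_congr rfl fun i _ =>
          Complex.normSq_mul _ _
    _ = ∑ k, (e k) ^ 2 := by
        refine Finset.sum_congr rfl fun k _ => ?_
        rw [← Finset.mul_sum, ← re_star_dot (v k)]
        have h1 := hv k k
        rw [if_pos rfl] at h1
        rw [h1]
        simp [Complex.normSq_ofReal]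
        ring

end EY

namespace EY

open Finset Complex Submodule Module

variable {M : ℕ}

lemma re_star_dot' {m : Type*} [Fintype m] (x : m → ℂ) :
    (star x ⬝ᵥ x).re = ∑ i, Complex.normSq (x i) := by
  rw [dotProduct, Complex.re_sum]
  refine Finset.sum_congr rfl fun i _ => ?_
  simp [Pi.star_apply, ← Complex.normSq_eq_conj_mul_self]

lemma re_star_dot_nonneg' {m : Type*} [Fintype m] (x : m → ℂ) : 0 ≤ (star x ⬝ᵥ x).re := by
  rw [re_star_dot']
  exact Finset.sum_nonneg fun i _ => Complex.normSq_nonneg _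

lemma linIndep_of_ortho {v : Fin M → Fin M → ℂ}
    (hv : ∀ j k, star (v j) ⬝ᵥ v k = if j = k then 1 else 0) :
    LinearIndependent ℂ v := by
  rw [Fintype.linearIndependent_iff]
  intro c hc i
  have h0 : (star (∑ j, c j • v j) ⬝ᵥ (∑ j, c j • v j)).re = 0 := by rw [hc]; simp
  rw [norm2_expand hv] at h0
  have h1 := (Finset.sum_eq_zero_iff_of_nonneg
    (fun j _ => Complex.normSq_nonneg (c j))).1 h0
  exact Complex.normSq_eq_zero.1 (h1 i (Finset.mem_univ i))

lemma image_eq_range (v : Fin M → Fin M → ℂ) (s : Finset (Fin M)) :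
    v '' ↑s = Set.range (fun j : {j // j ∈ s} => v j) := by
  ext y
  simp

lemma finrank_span_finset {v : Fin M → Fin M → ℂ}
    (hv : ∀ j k, star (v j) ⬝ᵥ v k = if j = k then 1 else 0) (s : Finset (Fin M)) :
    finrank ℂ (Submodule.span ℂ (v '' ↑s)) = s.card := by
  rw [image_eq_range v s]
  have h := finrank_span_eq_card (R := ℂ) (b := fun j : {j // j ∈ s} => v j)
    ((linIndep_of_ortho hv).comp Subtype.val Subtype.val_injective)
  rw [h]
  simp

lemma mem_span_finset' {v : Fin M → Fin M → ℂ} {s : Finset (Fin M)} {x : Fin M → ℂ}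
    (hx : x ∈ Submodule.span ℂ (v '' ↑s)) :
    ∃ c : Fin M → ℂ, (∀ j ∉ s, c j = 0) ∧ x = ∑ j, c j • v j := by
  classical
  rw [image_eq_range v s, mem_span_range_iff_exists_fun] at hx
  obtain ⟨c, hc⟩ := hx
  set c' : Fin M → ℂ := fun j => if h : j ∈ s then c ⟨j, h⟩ else 0 with hc'
  have h0 : ∀ j ∉ s, c' j = 0 := fun j hj => dif_neg hj
  have h2 : ∑ j ∈ s, c' j • v j = ∑ i : {j // j ∈ s}, c i • v ↑i := by
    rw [← Finset.sum_coe_sort s (fun j => c' j • v j)]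
    refine Finset.sum_congr rfl fun i _ => ?_
    have hci : c' ↑i = c i := by simp [hc', i.2]
    rw [hci]
  have h1 : ∑ j : Fin M, c' j • v j = ∑ j ∈ s, c' j • v j :=
    (Finset.sum_subset (Finset.subset_univ s) fun j _ hj => by
      rw [h0 j hj, zero_smul]).symm
  exact ⟨c', h0, by rw [h1, h2, hc]⟩

lemma mulVec_expand {A : Matrix (Fin M) (Fin M) ℂ} (hA : A.IsHermitian) (c : Fin M → ℂ) :
    A *ᵥ (∑ j, c j • vDesc hA j) = ∑ j, (c j * (eigDesc A j : ℂ)) • vDesc hA j := by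
  calc A *ᵥ (∑ j, c j • vDesc hA j) = A.mulVecLin (∑ j, c j • vDesc hA j) := rfl
    _ = ∑ j, A.mulVecLin (c j • vDesc hA j) := map_sum _ _ _
    _ = ∑ j, (c j * (eigDesc A j : ℂ)) • vDesc hA j := by
        refine Finset.sum_congr rfl fun j _ => ?_
        rw [Matrix.mulVecLin_apply, Matrix.mulVec_smul, mulVec_vDesc hA j, smul_smul, mul_comm]

lemma re_term (z : ℂ) (r : ℝ) : ((starRingEnd ℂ) z * (z * (r : ℂ))).re
    = Complex.normSq z * r := by
  rw [← mul_assoc, ← Complex.normSq_eq_conj_mul_self, ← Complex.ofReal_mul, Complex.ofReal_re]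

lemma quad_expand {A : Matrix (Fin M) (Fin M) ℂ} (hA : A.IsHermitian) (c : Fin M → ℂ) :
    (star (∑ j, c j • vDesc hA j) ⬝ᵥ (A *ᵥ (∑ j, c j • vDesc hA j))).re
      = ∑ j, Complex.normSq (c j) * eigDesc A j := by
  rw [mulVec_expand hA c, dot_expand (ortho_vDesc hA), Complex.re_sum]
  exact Finset.sum_congr rfl fun j _ => re_term _ _

lemma quad_lower {A : Matrix (Fin M) (Fin M) ℂ} (hA : A.IsHermitian) (k : Fin M)
    {x : Fin M → ℂ} (hx : x ∈ Submodule.span ℂ (vDesc hA '' ↑(Finset.Iic k))) :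
    eigDesc A k * (star x ⬝ᵥ x).re ≤ (star x ⬝ᵥ (A *ᵥ x)).re := by
  obtain ⟨c, hc0, hc⟩ := mem_span_finset' hx
  subst hc
  rw [quad_expand hA c, norm2_expand (ortho_vDesc hA), Finset.mul_sum]
  refine Finset.sum_le_sum fun j _ => ?_
  by_cases hj : j ∈ Finset.Iic k
  · have : eigDesc A k ≤ eigDesc A j := eigDesc_antitone hA (Finset.mem_Iic.1 hj)
    rw [mul_comm (eigDesc A k)]
    exact mul_le_mul_of_nonneg_left this (Complex.normSq_nonneg _)
  · rw [hc0 j hj]; simp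

lemma quad_upper {A : Matrix (Fin M) (Fin M) ℂ} (hA : A.IsHermitian) (k : Fin M)
    {x : Fin M → ℂ} (hx : x ∈ Submodule.span ℂ (vDesc hA '' ↑(Finset.Ici k))) :
    (star x ⬝ᵥ (A *ᵥ x)).re ≤ eigDesc A k * (star x ⬝ᵥ x).re := by
  obtain ⟨c, hc0, hc⟩ := mem_span_finset' hx
  subst hc
  rw [quad_expand hA c, norm2_expand (ortho_vDesc hA), Finset.mul_sum]
  refine Finset.sum_le_sum fun j _ => ?_
  by_cases hj : j ∈ Finset.Ici k
  · have : eigDesc A j ≤ eigDesc A k := eigDesc_antitone hA (Finset.mem_Ici.1 hj)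
    rw [mul_comm (eigDesc A k)]
    exact mul_le_mul_of_nonneg_left this (Complex.normSq_nonneg _)
  · rw [hc0 j hj]; simp

/-- Key min-max style lemma: a subspace of dimension `k+1` on which the quadratic form
is at least `c` forces the `k`-th largest eigenvalue to be at least `c`. -/
lemma le_eigDesc_of_subspace {A : Matrix (Fin M) (Fin M) ℂ} (hA : A.IsHermitian) (k : Fin M)
    (S : Submodule ℂ (Fin M → ℂ)) (hdim : (k : ℕ) + 1 ≤ finrank ℂ S) (c : ℝ)
    (hc : ∀ x ∈ S, x ≠ 0 → c * (star x ⬝ᵥ x).re ≤ (star x ⬝ᵥ (A *ᵥ x)).re) :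
    c ≤ eigDesc A k := by
  set T := Submodule.span ℂ (vDesc hA '' ↑(Finset.Ici k)) with hTdef
  have hT : finrank ℂ T = M - k := by
    rw [hTdef, finrank_span_finset (ortho_vDesc hA), Fin.card_Ici]
  have hpi : finrank ℂ (Fin M → ℂ) = M := by simp
  have hST : 0 < finrank ℂ ↥(S ⊓ T) := by
    have h1 := Submodule.finrank_sup_add_finrank_inf_eq S T
    have h2 : finrank ℂ ↥(S ⊔ T) ≤ M := (Submodule.finrank_le (S ⊔ T)).trans hpi.le
    have hk := k.isLt
    omega
  obtain ⟨x, hxST, hx0⟩ : ∃ x ∈ S ⊓ T, x ≠ 0 := by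
    rw [Module.finrank_pos_iff] at hST
    obtain ⟨y, hy⟩ := exists_ne (0 : ↥(S ⊓ T))
    exact ⟨y, y.2, fun h0 => hy (Subtype.ext h0)⟩
  have h1 := hc x hxST.1 hx0
  have h2 := quad_upper hA k hxST.2
  have h3 : 0 < (star x ⬝ᵥ x).re := re_star_dot_pos hx0
  exact le_of_mul_le_mul_right (h1.trans h2) h3

lemma star_mulVec_conjTranspose {T' : ℕ} (E : Matrix (Fin M) (Fin T') ℂ) (x : Fin M → ℂ) :
    star (Eᴴ *ᵥ x) = star x ᵥ* E := by
  rw [Matrix.star_mulVec, conjTranspose_conjTranspose]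

lemma dot_EEH {T' : ℕ} (E : Matrix (Fin M) (Fin T') ℂ) (x : Fin M → ℂ) :
    star x ⬝ᵥ ((E * Eᴴ) *ᵥ x) = star (Eᴴ *ᵥ x) ⬝ᵥ (Eᴴ *ᵥ x) := by
  rw [← mulVec_mulVec, Matrix.dotProduct_mulVec, ← star_mulVec_conjTranspose]

lemma re_dot_EEH_nonneg {T' : ℕ} (E : Matrix (Fin M) (Fin T') ℂ) (x : Fin M → ℂ) :
    0 ≤ (star x ⬝ᵥ ((E * Eᴴ) *ᵥ x)).re := by
  rw [dot_EEH]
  exact re_star_dot_nonneg' _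

lemma eigDesc_sub_le {T' : ℕ} {R : Matrix (Fin M) (Fin M) ℂ} (hR : R.IsHermitian)
    (E : Matrix (Fin M) (Fin T') ℂ) (k : Fin M) :
    eigDesc (R - E * Eᴴ) k ≤ eigDesc R k := by
  have hC : (R - E * Eᴴ).IsHermitian := hR.sub (isHermitian_mul_conjTranspose_self E)
  apply le_eigDesc_of_subspace hR k
    (Submodule.span ℂ (vDesc hC '' ↑(Finset.Iic k)))
  · rw [finrank_span_finset (ortho_vDesc hC), Fin.card_Iic]
  · intro x hx hx0
    have h1 := quad_lower hC k hx
    have h2 : (star x ⬝ᵥ ((R - E * Eᴴ) *ᵥ x)).re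
        = (star x ⬝ᵥ (R *ᵥ x)).re - (star x ⬝ᵥ ((E * Eᴴ) *ᵥ x)).re := by
      rw [Matrix.sub_mulVec, dotProduct_sub, Complex.sub_re]
    have h3 := re_dot_EEH_nonneg E x
    linarith

lemma eigDesc_le_sub {T' : ℕ} {R : Matrix (Fin M) (Fin M) ℂ} (hR : R.IsHermitian)
    (E : Matrix (Fin M) (Fin T') ℂ) (r : ℕ) (hrank : E.rank ≤ r)
    (k : Fin M) (hkr : (k : ℕ) + r < M) :
    eigDesc R ⟨(k : ℕ) + r, hkr⟩ ≤ eigDesc (R - E * Eᴴ) k := by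
  have hC : (R - E * Eᴴ).IsHermitian := hR.sub (isHermitian_mul_conjTranspose_self E)
  apply le_eigDesc_of_subspace hC k (LinearMap.ker (Eᴴ).mulVecLin ⊓
    Submodule.span ℂ (vDesc hR '' ↑(Finset.Iic (⟨(k : ℕ) + r, hkr⟩ : Fin M))))
  · have h1 := LinearMap.finrank_range_add_finrank_ker ((Eᴴ).mulVecLin)
    have h2 : finrank ℂ ↥(LinearMap.range (Eᴴ).mulVecLin) = Eᴴ.rank := rfl
    have h3 : Eᴴ.rank = E.rank := Matrix.rank_conjTranspose E
    have hpi : finrank ℂ (Fin M → ℂ) = M := by simp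
    rw [h2, h3, hpi] at h1
    have hT : finrank ℂ
        ↥(Submodule.span ℂ (vDesc hR '' ↑(Finset.Iic (⟨(k : ℕ) + r, hkr⟩ : Fin M))))
        = (k : ℕ) + r + 1 := by
      rw [finrank_span_finset (ortho_vDesc hR), Fin.card_Iic]
    have h4 := Submodule.finrank_sup_add_finrank_inf_eq (LinearMap.ker (Eᴴ).mulVecLin)
      (Submodule.span ℂ (vDesc hR '' ↑(Finset.Iic (⟨(k : ℕ) + r, hkr⟩ : Fin M))))
    have h5 : finrank ℂ ↥(LinearMap.ker (Eᴴ).mulVecLin ⊔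
        Submodule.span ℂ (vDesc hR '' ↑(Finset.Iic (⟨(k : ℕ) + r, hkr⟩ : Fin M)))) ≤ M :=
      (Submodule.finrank_le _).trans hpi.le
    omega
  · intro x hx hx0
    obtain ⟨hxK, hxT⟩ := hx
    have hEx : Eᴴ *ᵥ x = 0 := by
      have := LinearMap.mem_ker.1 hxK
      rwa [Matrix.mulVecLin_apply] at this
    have hCx : (R - E * Eᴴ) *ᵥ x = R *ᵥ x := by
      rw [Matrix.sub_mulVec, ← mulVec_mulVec, hEx, Matrix.mulVec_zero, sub_zero]
    rw [hCx]
    exact quad_lower hR ⟨(k : ℕ) + r, hkr⟩ hxT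

end EY

namespace EY

open Finset Complex Submodule Module

variable {M : ℕ}

lemma fro_eig {C : Matrix (Fin M) (Fin M) ℂ} (hC : C.IsHermitian) :
    ∑ i, ∑ l, ‖C i l‖ ^ 2 = ∑ k, (eigDesc C k) ^ 2 := by
  rw [← fro (ortho_vDesc hC) (eigDesc C)]
  exact Finset.sum_congr rfl fun i _ => Finset.sum_congr rfl fun l _ => by
    rw [spectral_entry hC i l]

lemma sum_bound {d μ : Fin M → ℝ} (r : ℕ) (hd : Antitone d)
    (hle : ∀ k : Fin M, μ k ≤ d k)
    (hge : ∀ (k : Fin M) (h : (k : ℕ) + r < M), d ⟨(k : ℕ) + r, h⟩ ≤ μ k) :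
    (∑ k ∈ Finset.univ.filter (fun k : Fin M => r ≤ (k : ℕ)), d k ^ 2)
      + ∑ k ∈ Finset.univ.filter (fun k : Fin M => (k : ℕ) < r ∧ d k < 0), d k ^ 2
    ≤ ∑ k, μ k ^ 2 := by
  classical
  set s : Finset (Fin M) :=
    Finset.univ.filter (fun k : Fin M => r ≤ (k : ℕ) ∨ ((k : ℕ) < r ∧ d k < 0)) with hs
  have hsplit : (∑ k ∈ Finset.univ.filter (fun k : Fin M => r ≤ (k : ℕ)), d k ^ 2)
      + ∑ k ∈ Finset.univ.filter (fun k : Fin M => (k : ℕ) < r ∧ d k < 0), d k ^ 2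
      = ∑ k ∈ s, d k ^ 2 := by
    rw [hs, Finset.filter_or]
    rw [Finset.sum_union]
    rw [Finset.disjoint_filter]
    intro k _ hk hk2
    omega
  rw [hsplit]
  set ψ : Fin M → Fin M := fun k =>
    if d k < 0 then k else ⟨(k : ℕ) - r, lt_of_le_of_lt (Nat.sub_le _ _) k.isLt⟩ with hψ
  have key : ∀ k ∈ s, d k ^ 2 ≤ μ (ψ k) ^ 2 := by
    intro k hk
    rw [hs, Finset.mem_filter] at hk
    by_cases hdk : d k < 0
    · have hψk : ψ k = k := if_pos hdk
      rw [hψk]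
      have := hle k
      nlinarith
    · have hkr : r ≤ (k : ℕ) := by
        rcases hk.2 with h | h
        · exact h
        · exact absurd h.2 hdk
      have hψk : ψ k = ⟨(k : ℕ) - r, lt_of_le_of_lt (Nat.sub_le _ _) k.isLt⟩ := if_neg hdk
      rw [hψk]
      have hlt : ((⟨(k : ℕ) - r, lt_of_le_of_lt (Nat.sub_le _ _) k.isLt⟩ : Fin M) : ℕ) + r
          < M := by
        have := k.isLt; simp; omega
      have h1 := hge ⟨(k : ℕ) - r, lt_of_le_of_lt (Nat.sub_le _ _) k.isLt⟩ hlt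
      have heq : (⟨((⟨(k : ℕ) - r, lt_of_le_of_lt (Nat.sub_le _ _) k.isLt⟩ : Fin M) : ℕ) + r,
          hlt⟩ : Fin M) = k := by
        apply Fin.ext; simp; omega
      rw [heq] at h1
      have hd0 : 0 ≤ d k := not_lt.1 hdk
      nlinarith
  have hinj : ∀ a ∈ s, ∀ b ∈ s, ψ a = ψ b → a = b := by
    intro a ha b hb hab
    simp only [hψ] at hab
    rw [hs, Finset.mem_filter] at ha hb
    by_cases hda : d a < 0 <;> by_cases hdb : d b < 0
    · rwa [if_pos hda, if_pos hdb] at hab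
    · exfalso
      rw [if_pos hda, if_neg hdb] at hab
      have hbr : r ≤ (b : ℕ) := by
        rcases hb.2 with h | h
        · exact h
        · exact absurd h.2 hdb
      have hab' : (a : ℕ) = (b : ℕ) - r := by
        have := congrArg (fun x : Fin M => (x : ℕ)) hab; simpa using this
      have hle' : a ≤ b := by
        rw [Fin.le_def]; omega
      have := hd hle'
      have hd0 : 0 ≤ d b := not_lt.1 hdb
      linarith
    · exfalso
      rw [if_neg hda, if_pos hdb] at hab
      have har : r ≤ (a : ℕ) := by
        rcases ha.2 with h | h
        · exact h
        · exact absurd h.2 hda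
      have hab' : (b : ℕ) = (a : ℕ) - r := by
        have := congrArg (fun x : Fin M => (x : ℕ)) hab; simpa using this.symm
      have hle' : b ≤ a := by
        rw [Fin.le_def]; omega
      have := hd hle'
      have hd0 : 0 ≤ d a := not_lt.1 hda
      linarith
    · rw [if_neg hda, if_neg hdb] at hab
      have hab' : (a : ℕ) - r = (b : ℕ) - r := by
        have := congrArg (fun x : Fin M => (x : ℕ)) hab; simpa using this
      have har : r ≤ (a : ℕ) := by
        rcases ha.2 with h | h
        · exact h
        · exact absurd h.2 hda
      have hbr : r ≤ (b : ℕ) := by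
        rcases hb.2 with h | h
        · exact h
        · exact absurd h.2 hdb
      apply Fin.ext; omega
  calc ∑ k ∈ s, d k ^ 2 ≤ ∑ k ∈ s, μ (ψ k) ^ 2 := Finset.sum_le_sum key
    _ = ∑ j ∈ s.image ψ, μ j ^ 2 := (Finset.sum_image (f := fun j => μ j ^ 2) hinj).symm
    _ ≤ ∑ j, μ j ^ 2 := Finset.sum_le_sum_of_subset_of_nonneg
        (Finset.subset_univ _) (fun j _ _ => sq_nonneg _)

end EY

namespace EY

open Finset Complex Submodule Module

variable {M : ℕ}

lemma exists_witness (r : ℕ) (hrM : r < M) {R : Matrix (Fin M) (Fin M) ℂ}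
    (hR : R.IsHermitian) :
    ∃ (E : Matrix (Fin M) (Fin r) ℂ), E.rank ≤ r ∧
      ∑ i, ∑ j, ‖(R - E * Eᴴ) i j‖ ^ 2
        = (∑ k ∈ Finset.univ.filter (fun k : Fin M => r ≤ (k : ℕ)), (eigDesc R k) ^ 2)
          + ∑ k ∈ Finset.univ.filter
              (fun k : Fin M => (k : ℕ) < r ∧ eigDesc R k < 0), (eigDesc R k) ^ 2 := by
  classical
  set d : Fin M → ℝ := eigDesc R with hd
  set b : Fin M → ℝ := fun k => if (k : ℕ) < r then max (d k) 0 else 0 with hb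
  have hblt : ∀ k : Fin M, (k : ℕ) < r → b k = max (d k) 0 := fun k hk => by
    simp only [hb]; rw [if_pos hk]
  have hbge : ∀ k : Fin M, r ≤ (k : ℕ) → b k = 0 := fun k hk => by
    simp only [hb]; rw [if_neg (by omega)]
  have hb0 : ∀ k, 0 ≤ b k := by
    intro k
    by_cases hk : (k : ℕ) < r
    · rw [hblt k hk]; exact le_max_right _ _
    · rw [hbge k (by omega)]
  set E : Matrix (Fin M) (Fin r) ℂ :=
    fun i j => (Real.sqrt (b (Fin.castLE hrM.le j)) : ℂ) * vDesc hR (Fin.castLE hrM.le j) i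
    with hE
  refine ⟨E, ?_, ?_⟩
  · have := Matrix.rank_le_card_width E
    simpa using this
  · have hEntry : ∀ i l, (R - E * Eᴴ) i l
        = ∑ k, ((d k - b k : ℝ) : ℂ) * (vDesc hR k i * (starRingEnd ℂ) (vDesc hR k l)) := by
      intro i l
      have hEEH : (E * Eᴴ) i l
          = ∑ k, (b k : ℂ) * (vDesc hR k i * (starRingEnd ℂ) (vDesc hR k l)) := by
        rw [Matrix.mul_apply]
        have hterm : ∀ j : Fin r, E i j * Eᴴ j l
            = (b (Fin.castLE hrM.le j) : ℂ) * (vDesc hR (Fin.castLE hrM.le j) i *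
                (starRingEnd ℂ) (vDesc hR (Fin.castLE hrM.le j) l)) := by
          intro j
          have hsq : ((Real.sqrt (b (Fin.castLE hrM.le j)) : ℝ) : ℂ) ^ 2
              = (b (Fin.castLE hrM.le j) : ℂ) := by
            rw [sq, ← Complex.ofReal_mul, Real.mul_self_sqrt (hb0 _)]
          rw [Matrix.conjTranspose_apply]
          simp only [hE, Matrix.conjTranspose_apply, star_mul', RCLike.star_def,
            Complex.conj_ofReal]
          linear_combination (vDesc hR (Fin.castLE hrM.le j) i *
            (starRingEnd ℂ) (vDesc hR (Fin.castLE hrM.le j) l)) * hsq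
        rw [show (∑ j, E i j * Eᴴ j l) = ∑ j : Fin r, (b (Fin.castLE hrM.le j) : ℂ) *
            (vDesc hR (Fin.castLE hrM.le j) i *
              (starRingEnd ℂ) (vDesc hR (Fin.castLE hrM.le j) l)) from
          Finset.sum_congr rfl fun j _ => hterm j]
        have hmap : Finset.univ.filter (fun k : Fin M => (k : ℕ) < r)
            = Finset.univ.map ⟨Fin.castLE hrM.le, Fin.castLE_injective hrM.le⟩ := by
          ext k
          simp only [Finset.mem_filter, Finset.mem_univ, true_and, Finset.mem_map,
            Function.Embedding.coeFn_mk]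
          constructor
          · intro hk
            exact ⟨⟨(k : ℕ), hk⟩, by ext; simp⟩
          · rintro ⟨j, rfl⟩
            exact j.isLt
        have hsum_map : ∑ j : Fin r, (b (Fin.castLE hrM.le j) : ℂ) *
              (vDesc hR (Fin.castLE hrM.le j) i *
                (starRingEnd ℂ) (vDesc hR (Fin.castLE hrM.le j) l))
            = ∑ k ∈ Finset.univ.map ⟨Fin.castLE hrM.le, Fin.castLE_injective hrM.le⟩,
                (b k : ℂ) * (vDesc hR k i * (starRingEnd ℂ) (vDesc hR k l)) := by
          exact (Finset.sum_map Finset.univ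
            ⟨Fin.castLE hrM.le, Fin.castLE_injective hrM.le⟩
            (fun k => (b k : ℂ) * (vDesc hR k i * (starRingEnd ℂ) (vDesc hR k l)))).symm
        rw [hsum_map, ← hmap]
        apply Finset.sum_subset (Finset.subset_univ _)
        intro k _ hk
        rw [Finset.mem_filter] at hk
        have hk2 : r ≤ (k : ℕ) := by
          by_contra h
          exact hk ⟨Finset.mem_univ k, by omega⟩
        rw [hbge k hk2]
        simp
      rw [Matrix.sub_apply, hEEH, spectral_entry hR i l, ← Finset.sum_sub_distrib]
      refine Finset.sum_congr rfl fun k _ => ?_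
      rw [← hd]
      push_cast
      ring
    have hfro : ∑ i, ∑ j, ‖(R - E * Eᴴ) i j‖ ^ 2 = ∑ k, (d k - b k) ^ 2 := by
      rw [show (∑ i, ∑ j, ‖(R - E * Eᴴ) i j‖ ^ 2)
          = ∑ i, ∑ l, ‖∑ k, ((d k - b k : ℝ) : ℂ) *
              (vDesc hR k i * (starRingEnd ℂ) (vDesc hR k l))‖ ^ 2 from
        Finset.sum_congr rfl fun i _ => Finset.sum_congr rfl fun l _ => by rw [hEntry i l]]
      exact fro (ortho_vDesc hR) _
    rw [hfro]
    rw [← Finset.sum_filter_add_sum_filter_not Finset.univ (fun k : Fin M => r ≤ (k : ℕ))]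
    congr 1
    · refine Finset.sum_congr rfl fun k hk => ?_
      rw [Finset.mem_filter] at hk
      rw [hbge k hk.2, sub_zero]
    · rw [Finset.sum_filter, Finset.sum_filter]
      refine Finset.sum_congr rfl fun k _ => ?_
      by_cases hkr : (k : ℕ) < r
      · have hT : ¬ r ≤ (k : ℕ) := by omega
        rw [if_pos hT]
        by_cases hdk : d k < 0
        · rw [if_pos ⟨hkr, hdk⟩, hblt k hkr, max_eq_right hdk.le, sub_zero]
        · rw [if_neg (by tauto), hblt k hkr, max_eq_left (not_lt.1 hdk), sub_self]
          simp
      · rw [if_neg (by omega), if_neg (by tauto)]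

end EY

theorem stmt10 {M N : ℕ} (hN : N - 1 < M) (R : Matrix (Fin M) (Fin M) ℂ)
    (hR : R.IsHermitian) :
    IsLeast
      {x : ℝ | ∃ (T : ℕ) (E : Matrix (Fin M) (Fin T) ℂ), E.rank ≤ N - 1 ∧
        x = ∑ i, ∑ j, ‖(R - E * Eᴴ) i j‖ ^ 2}
      ((∑ k ∈ Finset.univ.filter (fun k : Fin M => N - 1 ≤ (k : ℕ)),
          (eigDesc R k) ^ 2) +
        ∑ k ∈ Finset.univ.filter
            (fun k : Fin M => (k : ℕ) < N - 1 ∧ eigDesc R k < 0),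
          (eigDesc R k) ^ 2) ∧
    ((∀ k : Fin M, (k : ℕ) < N - 1 → 0 ≤ eigDesc R k) →
      IsLeast
        {x : ℝ | ∃ (T : ℕ) (E : Matrix (Fin M) (Fin T) ℂ), E.rank ≤ N - 1 ∧
          x = ∑ i, ∑ j, ‖(R - E * Eᴴ) i j‖ ^ 2}
        (∑ k ∈ Finset.univ.filter (fun k : Fin M => N - 1 ≤ (k : ℕ)),
          (eigDesc R k) ^ 2)) := by
  have hfirst : IsLeast
      {x : ℝ | ∃ (T : ℕ) (E : Matrix (Fin M) (Fin T) ℂ), E.rank ≤ N - 1 ∧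
        x = ∑ i, ∑ j, ‖(R - E * Eᴴ) i j‖ ^ 2}
      ((∑ k ∈ Finset.univ.filter (fun k : Fin M => N - 1 ≤ (k : ℕ)),
          (eigDesc R k) ^ 2) +
        ∑ k ∈ Finset.univ.filter
            (fun k : Fin M => (k : ℕ) < N - 1 ∧ eigDesc R k < 0),
          (eigDesc R k) ^ 2) := by
    constructor
    · obtain ⟨E, hrankE, hval⟩ := EY.exists_witness (N - 1) hN hR
      exact ⟨N - 1, E, hrankE, hval.symm⟩
    · rintro x ⟨T, E, hrankE, rfl⟩
      have hC : (R - E * Eᴴ).IsHermitian :=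
        hR.sub (isHermitian_mul_conjTranspose_self E)
      rw [EY.fro_eig hC]
      exact EY.sum_bound (N - 1) (EY.eigDesc_antitone hR)
        (fun k => EY.eigDesc_sub_le hR E k)
        (fun k h => EY.eigDesc_le_sub hR E (N - 1) hrankE k h)
  refine ⟨hfirst, fun hnn => ?_⟩
  have hempty : Finset.univ.filter
      (fun k : Fin M => (k : ℕ) < N - 1 ∧ eigDesc R k < 0) = ∅ := by
    rw [Finset.filter_eq_empty_iff]
    intro k _
    intro hcon
    exact absurd hcon.2 (not_lt.2 (hnn k hcon.1))
  have hzero : (∑ k ∈ Finset.univ.filter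
      (fun k : Fin M => (k : ℕ) < N - 1 ∧ eigDesc R k < 0), (eigDesc R k) ^ 2) = 0 := by
    rw [hempty]; simp
  have := hfirst
  rw [hzero, add_zero] at this
  exact this
end

section
/- Let U_s ∈ C^{M×N} have orthonormal columns (M > N) and let a ∈ C^M be nonzero. Then the N-th largest eigenvalue of P_a^⊥ U_s U_s^H satisfies λ_N(P_a^⊥ U_s U_s^H) = a^H (I_M - U_s U_s^H) a / (a^H a). -/
open Matrix ComplexOrder

/-- Orthogonal projector onto the orthogonal complement of `span {a}`. -/
noncomputable def projPerp {M : ℕ} (a : Fin M → ℂ) : Matrix (Fin M) (Fin M) ℂ :=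
  1 - (star a ⬝ᵥ a)⁻¹ • Matrix.vecMulVec a (star a)

section Aux

variable {m n p q : Type*} [Fintype m] [Fintype n] [Fintype p] [Fintype q]

private lemma mul_vecMulVec' (B : Matrix p m ℂ) (u : m → ℂ) (v : n → ℂ) :
    B * vecMulVec u v = vecMulVec (B *ᵥ u) v := by
  ext i j
  simp [mul_apply, vecMulVec_apply, mulVec, dotProduct, Finset.sum_mul, mul_assoc]

private lemma vecMulVec_mul' (u : m → ℂ) (v : n → ℂ) (C : Matrix n q ℂ) :
    vecMulVec u v * C = vecMulVec u (v ᵥ* C) := by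
  ext i j
  simp [mul_apply, vecMulVec_apply, vecMul, dotProduct, Finset.mul_sum, mul_assoc]

private lemma vecMulVec_mul_vecMulVec' (u : m → ℂ) (v : m → ℂ) :
    vecMulVec u v * vecMulVec u v = (v ⬝ᵥ u) • vecMulVec u v := by
  rw [vecMulVec_mul']
  ext i j
  simp only [vecMulVec_apply, vecMul, dotProduct, Matrix.smul_apply, smul_eq_mul]
  rw [Finset.mul_sum, Finset.sum_mul]
  exact Finset.sum_congr rfl fun k _ => by ring

private lemma trace_vecMulVec' (u v : m → ℂ) : trace (vecMulVec u v) = v ⬝ᵥ u := by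
  simp [trace, vecMulVec_apply, dotProduct, diag, mul_comm]

private lemma vecMulVec_conjTranspose (u : m → ℂ) (v : n → ℂ) :
    (vecMulVec u v)ᴴ = vecMulVec (star v) (star u) := by
  ext i j
  simp [conjTranspose_apply, vecMulVec_apply, mul_comm]

private lemma dotProduct_star_self_real (x : m → ℂ) :
    star x ⬝ᵥ x = ((∑ i, Complex.normSq (x i) : ℝ) : ℂ) := by
  push_cast
  refine Finset.sum_congr rfl fun i _ => ?_
  simp [Complex.normSq_eq_conj_mul_self]

private lemma trace_eig {k : ℕ} (A : Matrix (Fin k) (Fin k) ℂ) (hA : A.IsHermitian) :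
    trace A = ∑ i, (hA.eigenvalues i : ℂ) ∧
    trace (A * A) = ∑ i, (hA.eigenvalues i : ℂ) ^ 2 := by
  set V := (hA.eigenvectorUnitary : Matrix (Fin k) (Fin k) ℂ) with hVdef
  have hV : star V * V = 1 := (Unitary.mem_iff.mp hA.eigenvectorUnitary.2).1
  have hV' : ∀ X : Matrix (Fin k) (Fin k) ℂ, star V * (V * X) = X := fun X => by
    rw [← Matrix.mul_assoc, hV, Matrix.one_mul]
  set D : Matrix (Fin k) (Fin k) ℂ := diagonal (RCLike.ofReal ∘ hA.eigenvalues) with hDdef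
  have hspec : A = V * D * star V := hA.spectral_theorem
  have h1 : trace A = ∑ i, (hA.eigenvalues i : ℂ) := by
    conv_lhs => rw [hspec]
    rw [trace_mul_comm, ← Matrix.mul_assoc, hV, Matrix.one_mul, hDdef, trace_diagonal]
    simp
  refine ⟨h1, ?_⟩
  have hAA : A * A = V * (D * D) * star V := by
    conv_lhs => rw [hspec]
    simp only [Matrix.mul_assoc, hV']
  rw [hAA, trace_mul_comm, ← Matrix.mul_assoc, hV, Matrix.one_mul, hDdef,
    diagonal_mul_diagonal, trace_diagonal]
  simp [pow_two]

end Aux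

private lemma sorted_key {M N : ℕ} (hMN : N < M) (hN : 1 ≤ N) (g : Fin M → ℝ) (t : ℝ)
    (hmono : Monotone g) (ht0 : 0 ≤ t) (ht1 : t ≤ 1)
    (hv : ∀ i, g i = 0 ∨ g i = 1 ∨ g i = t)
    (h1 : ∑ i, g i = ((N : ℝ) - 1) + t)
    (h2 : ∑ i, g i ^ 2 = ((N : ℝ) - 1) + t ^ 2) :
    g ⟨M - N, by omega⟩ = t := by
  classical
  set K : Fin M := ⟨M - N, by omega⟩ with hK
  have hg0 : ∀ i, 0 ≤ g i := fun i => by rcases hv i with h | h | h <;> rw [h] <;> linarith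
  have hg1 : ∀ i, g i ≤ 1 := fun i => by rcases hv i with h | h | h <;> rw [h] <;> linarith
  set n1 : ℕ := (Finset.univ.filter (fun i => g i = 1)).card with hn1
  set n0 : ℕ := (Finset.univ.filter (fun i => g i = 0)).card with hn0
  have hzero : g K = 0 → (M - N + 1 : ℕ) ≤ n0 := by
    intro h
    have hsub : Finset.Iic K ⊆ Finset.univ.filter (fun i => g i = 0) := by
      intro j hj
      simp only [Finset.mem_Iic] at hj
      have := hmono hj
      simp only [Finset.mem_filter, Finset.mem_univ, true_and]
      nlinarith [hg0 j]
    have := Finset.card_le_card hsub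
    rwa [Fin.card_Iic] at this
  have hone : g K = 1 → (N : ℕ) ≤ n1 := by
    intro h
    have hsub : Finset.Ici K ⊆ Finset.univ.filter (fun i => g i = 1) := by
      intro j hj
      simp only [Finset.mem_Ici] at hj
      have := hmono hj
      simp only [Finset.mem_filter, Finset.mem_univ, true_and]
      nlinarith [hg1 j]
    have := Finset.card_le_card hsub
    rw [Fin.card_Ici] at this
    have hKval : (K : ℕ) = M - N := rfl
    omega
  have e1 : (1 - t) * n1 = (1 - t) * ((N : ℝ) - 1) := by
    have expand : ∑ i, g i * (g i - t) = (1 - t) * n1 := by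
      rw [← Finset.sum_filter_add_sum_filter_not Finset.univ (fun i => g i = 1)]
      have hA : ∑ i ∈ Finset.univ.filter (fun i => g i = 1), g i * (g i - t) = (1 - t) * n1 := by
        rw [Finset.sum_congr rfl (fun i hi => ?_), Finset.sum_const, hn1, nsmul_eq_mul, mul_comm]
        · simp only [Finset.mem_filter] at hi
          rw [hi.2]; ring
      have hB : ∑ i ∈ Finset.univ.filter (fun i => ¬ g i = 1), g i * (g i - t) = 0 := by
        refine Finset.sum_eq_zero fun i hi => ?_
        simp only [Finset.mem_filter] at hi
        rcases hv i with h | h | h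
        · rw [h]; ring
        · exact absurd h hi.2
        · rw [h]; ring
      rw [hA, hB]; ring
    have val : ∑ i, g i * (g i - t) = (1 - t) * ((N : ℝ) - 1) := by
      have : ∑ i, g i * (g i - t) = (∑ i, g i ^ 2) - t * ∑ i, g i := by
        rw [Finset.mul_sum, ← Finset.sum_sub_distrib]
        exact Finset.sum_congr rfl fun i _ => by ring
      rw [this, h1, h2]; ring
    linarith [expand, val]
  have e0 : t * n0 = t * ((M : ℝ) - N) := by
    have expand : ∑ i, (g i - t) * (g i - 1) = t * n0 := by
      rw [← Finset.sum_filter_add_sum_filter_not Finset.univ (fun i => g i = 0)]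
      have hA : ∑ i ∈ Finset.univ.filter (fun i => g i = 0), (g i - t) * (g i - 1) = t * n0 := by
        rw [Finset.sum_congr rfl (fun i hi => ?_), Finset.sum_const, hn0, nsmul_eq_mul, mul_comm]
        · simp only [Finset.mem_filter] at hi
          rw [hi.2]; ring
      have hB : ∑ i ∈ Finset.univ.filter (fun i => ¬ g i = 0), (g i - t) * (g i - 1) = 0 := by
        refine Finset.sum_eq_zero fun i hi => ?_
        simp only [Finset.mem_filter] at hi
        rcases hv i with h | h | h
        · exact absurd h hi.2
        · rw [h]; ring
        · rw [h]; ring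
      rw [hA, hB]; ring
    have val : ∑ i, (g i - t) * (g i - 1) = t * ((M : ℝ) - N) := by
      have step : ∑ i, (g i - t) * (g i - 1) = ∑ i, (g i ^ 2 - (1 + t) * g i + t) :=
        Finset.sum_congr rfl fun i _ => by ring
      rw [step, Finset.sum_add_distrib, Finset.sum_sub_distrib, ← Finset.mul_sum, h1, h2,
        Finset.sum_const, Finset.card_univ, Fintype.card_fin, nsmul_eq_mul]
      ring
    linarith [expand, val]
  by_cases ht1' : t = 1
  · subst ht1'
    have hvals : ∀ i, g i = 0 ∨ g i = 1 := fun i => by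
      rcases hv i with h | h | h
      · exact Or.inl h
      · exact Or.inr h
      · exact Or.inr h
    have hsum : (n1 : ℝ) = (N : ℝ) := by
      have : ∑ i, g i = (n1 : ℝ) := by
        rw [← Finset.sum_filter_add_sum_filter_not Finset.univ (fun i => g i = 1)]
        have hA : ∑ i ∈ Finset.univ.filter (fun i => g i = 1), g i = (n1 : ℝ) := by
          rw [Finset.sum_congr rfl (fun i hi => (Finset.mem_filter.mp hi).2),
            Finset.sum_const, hn1, nsmul_eq_mul, mul_one]
        have hB : ∑ i ∈ Finset.univ.filter (fun i => ¬ g i = 1), g i = 0 :=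
          Finset.sum_eq_zero fun i hi => (hvals i).resolve_right (Finset.mem_filter.mp hi).2
        rw [hA, hB, add_zero]
      rw [this] at h1; linarith
    have hn1N : n1 = N := by exact_mod_cast hsum
    have hcompl : n0 = M - N := by
      have : Finset.univ.filter (fun i => g i = 0) =
          Finset.univ.filter (fun i => ¬ g i = 1) := by
        refine Finset.filter_congr fun i _ => ?_
        rcases hvals i with h | h <;> simp [h]
      rw [hn0, this, Finset.filter_not, Finset.card_sdiff_of_subset (Finset.filter_subset _ _),
        Finset.card_univ, Fintype.card_fin, ← hn1, hn1N]
    rcases hvals K with h | h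
    · exact absurd (hzero h) (by omega)
    · exact h
  · have htlt : t < 1 := lt_of_le_of_ne ht1 ht1'
    have hn1val : (n1 : ℝ) = (N : ℝ) - 1 := by
      have := mul_left_cancel₀ (by linarith : (1 : ℝ) - t ≠ 0) e1
      linarith
    have hn1N : n1 = N - 1 := by
      have : (n1 : ℝ) = ((N - 1 : ℕ) : ℝ) := by
        rw [hn1val, Nat.cast_sub hN, Nat.cast_one]
      exact_mod_cast this
    have hgK1 : g K ≠ 1 := fun h => by
      have := hone h; omega
    by_cases ht0' : t = 0
    · subst ht0'
      rcases hv K with h | h | h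
      · exact h
      · exact absurd h hgK1
      · exact h
    · have htpos : 0 < t := lt_of_le_of_ne ht0 (Ne.symm ht0')
      have hn0val : (n0 : ℝ) = (M : ℝ) - N := by
        have := mul_left_cancel₀ (ne_of_gt htpos) e0
        linarith
      have hn0N : n0 = M - N := by
        have : (n0 : ℝ) = ((M - N : ℕ) : ℝ) := by
          rw [hn0val, Nat.cast_sub (le_of_lt hMN)]
        exact_mod_cast this
      have hgK0 : g K ≠ 0 := fun h => by
        have := hzero h; omega
      rcases hv K with h | h | h
      · exact absurd h hgK0
      · exact absurd h hgK1
      · exact h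

/-- The `N`-th largest eigenvalue of `P_a^⊥ U_s U_sᴴ` (computed through the Hermitian
matrix `P_a^⊥ U_s U_sᴴ P_a^⊥`, which has the same eigenvalues) equals the MUSIC
null-spectrum `aᴴ (I - U_s U_sᴴ) a / (aᴴ a)`. -/
theorem stmt13 {M N : ℕ} (hMN : N < M) (hN : 1 ≤ N)
    (Us : Matrix (Fin M) (Fin N) ℂ) (hUs : Usᴴ * Us = 1)
    (a : Fin M → ℂ) (ha : a ≠ 0) :
    (eigDesc (projPerp a * (Us * Usᴴ) * projPerp a)
        ⟨N - 1, lt_trans (by omega) hMN⟩ : ℂ) =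
      (star a ⬝ᵥ ((1 - Us * Usᴴ) *ᵥ a)) / (star a ⬝ᵥ a) := by
  classical
  set α : ℂ := star a ⬝ᵥ a with hα
  set c : ℂ := α⁻¹ with hc
  set P : Matrix (Fin M) (Fin M) ℂ := projPerp a with hP
  set Q : Matrix (Fin M) (Fin M) ℂ := Us * Usᴴ with hQ
  set w : Fin N → ℂ := Usᴴ *ᵥ a with hw
  set W : Matrix (Fin N) (Fin N) ℂ := vecMulVec w (star w) with hW
  set s2 : ℂ := star w ⬝ᵥ w with hs2
  set Va : Matrix (Fin M) (Fin M) ℂ := vecMulVec a (star a) with hVa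
  -- real scalars
  set αr : ℝ := ∑ i, Complex.normSq (a i) with hαr
  have hαre : α = (αr : ℂ) := dotProduct_star_self_real a
  have hαrpos : 0 < αr := by
    obtain ⟨i, hi⟩ := Function.ne_iff.mp ha
    refine Finset.sum_pos' (fun j _ => Complex.normSq_nonneg _) ⟨i, Finset.mem_univ i, ?_⟩
    exact Complex.normSq_pos.mpr hi
  have hαne : α ≠ 0 := by
    rw [hαre]
    exact_mod_cast ne_of_gt hαrpos
  set s2r : ℝ := ∑ i, Complex.normSq (w i) with hs2r
  have hs2re : s2 = (s2r : ℂ) := dotProduct_star_self_real w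
  have hs2rnn : 0 ≤ s2r := Finset.sum_nonneg fun i _ => Complex.normSq_nonneg _
  -- basic matrix identities
  have hstarw : star a ᵥ* Us = star w := by
    rw [hw, star_mulVec, conjTranspose_conjTranspose]
  have hVaVa : Va * Va = α • Va := vecMulVec_mul_vecMulVec' a (star a)
  have hcca : c * c * α = c := by
    rw [hc]; field_simp
  have hPexp : P = 1 - c • Va := rfl
  have hstarα : star α = α := by
    rw [hαre]; simp
  have hPH : Pᴴ = P := by
    rw [hPexp, conjTranspose_sub, conjTranspose_one, conjTranspose_smul,
      vecMulVec_conjTranspose, star_star]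
    rw [hVa]
    congr 1
    rw [hc, star_inv₀, hstarα]
  have hPP : P * P = P := by
    rw [hPexp]
    rw [sub_mul, one_mul, mul_sub, mul_one, Matrix.smul_mul, Matrix.mul_smul, hVaVa,
      smul_smul, smul_smul, hcca]
    module
  have hQH : Qᴴ = Q := by
    rw [hQ, conjTranspose_mul, conjTranspose_conjTranspose]
  have hQQ : Q * Q = Q := by
    rw [hQ, Matrix.mul_assoc, ← Matrix.mul_assoc Usᴴ, hUs, Matrix.one_mul]
  -- X and C
  set X : Matrix (Fin N) (Fin M) ℂ := Usᴴ * P with hX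
  set C : Matrix (Fin N) (Fin N) ℂ := 1 - c • W with hC
  have hXH : Xᴴ = P * Us := by
    rw [hX, conjTranspose_mul, conjTranspose_conjTranspose, hPH]
  have hAX : P * Q * P = Xᴴ * X := by
    rw [hXH, hX, hQ]
    simp only [Matrix.mul_assoc]
  have hUsVaUs : Usᴴ * Va * Us = W := by
    rw [hVa, mul_vecMulVec', vecMulVec_mul', hstarw, hW, hw]
  have hXX : X * Xᴴ = C := by
    rw [hX, hXH, Matrix.mul_assoc, ← Matrix.mul_assoc P P Us, hPP, ← Matrix.mul_assoc]
    rw [hPexp, Matrix.mul_sub, Matrix.mul_one, Matrix.mul_smul, Matrix.sub_mul, hUs,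
      Matrix.smul_mul, hUsVaUs, hC]
  -- t
  set tR : ℝ := 1 - s2r / αr with htR
  set tC : ℂ := 1 - c * s2 with htCdef
  have htC : (tR : ℂ) = tC := by
    rw [htR, htCdef, hc, hαre, hs2re]
    push_cast
    rw [div_eq_inv_mul]
  have hs2le : s2r ≤ αr := by
    set R : Matrix (Fin M) (Fin M) ℂ := 1 - Q with hR
    have hRH : Rᴴ = R := by rw [hR, conjTranspose_sub, conjTranspose_one, hQH]
    have hRR : R * R = R := by
      rw [hR]
      simp only [Matrix.mul_sub, Matrix.sub_mul, Matrix.mul_one, Matrix.one_mul, hQQ]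
      abel
    have hQa : star a ⬝ᵥ (Q *ᵥ a) = s2 := by
      rw [hQ, ← Matrix.mulVec_mulVec, dotProduct_mulVec, hstarw, ← hw, hs2]
    have e1 : star a ⬝ᵥ (R *ᵥ a) = (star a ᵥ* R) ⬝ᵥ a := dotProduct_mulVec _ _ _
    have e2 : (star a ᵥ* R) ⬝ᵥ (R *ᵥ a) = (star a ᵥ* (R * R)) ⬝ᵥ a := by
      rw [dotProduct_mulVec, vecMul_vecMul]
    have hbb : star a ⬝ᵥ (R *ᵥ a) = ((∑ i, Complex.normSq ((R *ᵥ a) i) : ℝ) : ℂ) := by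
      rw [← dotProduct_star_self_real (R *ᵥ a), star_mulVec, hRH, e2, hRR, ← e1]
    have hval : star a ⬝ᵥ (R *ᵥ a) = α - s2 := by
      rw [hR, Matrix.sub_mulVec, Matrix.one_mulVec, dotProduct_sub, hQa, hα]
    have : ((αr - s2r : ℝ) : ℂ) = ((∑ i, Complex.normSq ((R *ᵥ a) i) : ℝ) : ℂ) := by
      rw [← hbb, hval, hαre, hs2re]; push_cast; ring
    have h2 : αr - s2r = ∑ i, Complex.normSq ((R *ᵥ a) i) := by exact_mod_cast this
    nlinarith [Finset.sum_nonneg fun i (_ : i ∈ Finset.univ) => Complex.normSq_nonneg ((R *ᵥ a) i)]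
  have ht0 : 0 ≤ tR := by
    rw [htR, sub_nonneg, div_le_one hαrpos]; exact hs2le
  have ht1 : tR ≤ 1 := by
    rw [htR]
    have : 0 ≤ s2r / αr := div_nonneg hs2rnn (le_of_lt hαrpos)
    linarith
  -- C polynomial
  have hWW : W * W = s2 • W := by
    rw [hW, vecMulVec_mul_vecMulVec', hs2]
  have hCC : C * C = (1 + tC) • C - tC • 1 := by
    rw [hC]
    rw [sub_mul, one_mul, mul_sub, mul_one, Matrix.smul_mul, Matrix.mul_smul, hWW,
      smul_smul, smul_smul, htCdef]
    module
  -- A and its Hermitianness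
  set A : Matrix (Fin M) (Fin M) ℂ := P * Q * P with hA'
  have hAherm : A.IsHermitian := by
    rw [hAX]
    exact isHermitian_conjTranspose_mul_self X
  set f : Fin M → ℝ := hAherm.eigenvalues with hf
  -- powers of A
  have hA2 : A * A = Xᴴ * C * X := by
    rw [hAX, Matrix.mul_assoc, ← Matrix.mul_assoc X Xᴴ X, hXX, ← Matrix.mul_assoc]
  have hA3 : A * A * A = (1 + tC) • (A * A) - tC • A := by
    have step : A * A * A = Xᴴ * (C * C) * X := by
      rw [hA2, hAX]
      rw [Matrix.mul_assoc (Xᴴ * C) X (Xᴴ * X), ← Matrix.mul_assoc X Xᴴ X, hXX]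
      simp only [Matrix.mul_assoc]
    rw [step, hCC]
    simp only [Matrix.sub_mul, Matrix.mul_sub, Matrix.mul_smul, Matrix.smul_mul, Matrix.mul_one]
    rw [hA2, hAX]
  -- eigenvalue cubic
  have heig : ∀ i, (f i : ℂ) = 0 ∨ (f i : ℂ) = 1 ∨ (f i : ℂ) = tC := by
    intro i
    set v : Fin M → ℂ := ⇑(hAherm.eigenvectorBasis i) with hv
    have hvne : v ≠ 0 := by
      intro h0
      refine hAherm.eigenvectorBasis.orthonormal.ne_zero i ?_
      ext j
      exact congrFun h0 j
    have hAv : A *ᵥ v = (f i : ℂ) • v := by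
      rw [hv, hAherm.mulVec_eigenvectorBasis i]
      ext j
      simp [Complex.real_smul, hf]
    have hA2v : (A * A) *ᵥ v = ((f i : ℂ) ^ 2) • v := by
      rw [← Matrix.mulVec_mulVec, hAv, Matrix.mulVec_smul, hAv, smul_smul, pow_two]
    have hA3v : (A * A * A) *ᵥ v = ((f i : ℂ) ^ 3) • v := by
      rw [← Matrix.mulVec_mulVec, hAv, Matrix.mulVec_smul, hA2v, smul_smul]
      congr 1
      ring
    have hcomb : ((f i : ℂ) ^ 3 - (1 + tC) * (f i : ℂ) ^ 2 + tC * (f i : ℂ)) • v = 0 := by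
      have h3 := congrArg (fun B => B *ᵥ v) hA3
      simp only [Matrix.sub_mulVec, Matrix.smul_mulVec] at h3
      rw [hA3v, hA2v, hAv, smul_smul, smul_smul] at h3
      calc ((f i : ℂ) ^ 3 - (1 + tC) * (f i : ℂ) ^ 2 + tC * (f i : ℂ)) • v
          = (f i : ℂ) ^ 3 • v -
              (((1 + tC) * (f i : ℂ) ^ 2) • v - (tC * (f i : ℂ)) • v) := by module
        _ = 0 := by rw [h3]; abel
    have hscal : (f i : ℂ) ^ 3 - (1 + tC) * (f i : ℂ) ^ 2 + tC * (f i : ℂ) = 0 := by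
      rcases smul_eq_zero.mp hcomb with h | h
      · exact h
      · exact absurd h hvne
    have hfact : (f i : ℂ) * ((f i : ℂ) - 1) * ((f i : ℂ) - tC) = 0 := by
      linear_combination hscal
    rcases mul_eq_zero.mp hfact with h | h
    · rcases mul_eq_zero.mp h with h' | h'
      · exact Or.inl h'
      · exact Or.inr (Or.inl (sub_eq_zero.mp h'))
    · exact Or.inr (Or.inr (sub_eq_zero.mp h))
  -- traces
  have htrC : trace C = ((N : ℂ) - 1) + tC := by
    rw [hC, trace_sub, trace_smul, trace_one, hW, trace_vecMulVec', ← hs2, htCdef]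
    simp only [Fintype.card_fin, smul_eq_mul]
    ring
  have htrA : trace A = ((N : ℂ) - 1) + tC := by
    rw [hAX, trace_mul_comm, hXX, htrC]
  have htrCC : trace (C * C) = ((N : ℂ) - 1) + tC ^ 2 := by
    rw [hCC, trace_sub, trace_smul, trace_smul, htrC, trace_one]
    simp only [Fintype.card_fin, smul_eq_mul]
    rw [htCdef]
    ring
  have htrAA : trace (A * A) = ((N : ℂ) - 1) + tC ^ 2 := by
    rw [hA2, Matrix.mul_assoc, trace_mul_comm, Matrix.mul_assoc, hXX, htrCC]
  obtain ⟨htr1, htr2⟩ := trace_eig A hAherm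
  have hsum1 : ∑ i, f i = ((N : ℝ) - 1) + tR := by
    have : ((∑ i, f i : ℝ) : ℂ) = (((N : ℝ) - 1 + tR : ℝ) : ℂ) := by
      rw [hf]
      push_cast
      rw [← htr1, htrA, htC]
    exact_mod_cast this
  have hsum2 : ∑ i, f i ^ 2 = ((N : ℝ) - 1) + tR ^ 2 := by
    have : ((∑ i, f i ^ 2 : ℝ) : ℂ) = (((N : ℝ) - 1 + tR ^ 2 : ℝ) : ℂ) := by
      rw [hf]
      push_cast
      rw [← htr2, htrAA, htC]
    exact_mod_cast this
  -- sorted eigenvalues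
  set σ : Equiv.Perm (Fin M) := Tuple.sort f with hσ
  set g : Fin M → ℝ := f ∘ σ with hg
  have hmono : Monotone g := Tuple.monotone_sort f
  have hgv : ∀ i, g i = 0 ∨ g i = 1 ∨ g i = tR := by
    intro i
    rcases heig (σ i) with h | h | h
    · exact Or.inl (by exact_mod_cast h)
    · exact Or.inr (Or.inl (by exact_mod_cast h))
    · refine Or.inr (Or.inr ?_)
      rw [← htC] at h
      exact_mod_cast h
  have hgsum1 : ∑ i, g i = ((N : ℝ) - 1) + tR := by
    rw [hg, ← hsum1]
    exact Equiv.sum_comp σ f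
  have hgsum2 : ∑ i, g i ^ 2 = ((N : ℝ) - 1) + tR ^ 2 := by
    rw [hg, ← hsum2]
    exact Equiv.sum_comp σ (fun j => f j ^ 2)
  have hkey : g ⟨M - N, by omega⟩ = tR :=
    sorted_key hMN hN g tR hmono ht0 ht1 hgv hgsum1 hgsum2
  -- unfold eigDesc
  have hrev : (⟨N - 1, lt_trans (by omega) hMN⟩ : Fin M).rev = ⟨M - N, by omega⟩ := by
    ext
    simp [Fin.rev]
    omega
  have hLHS : eigDesc A ⟨N - 1, lt_trans (by omega) hMN⟩ = tR := by
    unfold eigDesc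
    rw [dif_pos hAherm, Function.comp_apply, hrev]
    exact hkey
  rw [hLHS]
  -- RHS
  have hQa : star a ⬝ᵥ (Q *ᵥ a) = s2 := by
    rw [hQ, ← Matrix.mulVec_mulVec, dotProduct_mulVec, hstarw, ← hw, hs2]
  have hRHS : star a ⬝ᵥ ((1 - Q) *ᵥ a) = α - s2 := by
    rw [Matrix.sub_mulVec, Matrix.one_mulVec, dotProduct_sub, hQa, hα]
  have hαcne : (αr : ℂ) ≠ 0 := by exact_mod_cast ne_of_gt hαrpos
  rw [hRHS, hαre, hs2re, htR]
  push_cast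
  field_simp
end

section
/- Let U_s ∈ C^{M×N} have orthonormal columns, W ∈ C^{N×N} Hermitian positive semidefinite, and a ∈ C^M nonzero. Then for all k ≤ N, λ_k(P_a^⊥ U_s W U_s^H) = λ_k(W - (1/‖a‖₂²) W^{1/2} U_s^H a a^H U_s W^{1/2}), and λ_k(P_a^⊥ U_s W U_s^H) = 0 for k > N. -/
open Matrix ComplexOrder

/-- The positive semidefinite square root of a positive semidefinite matrix
(the definition `Matrix.PosSemidef.sqrt` of the older Mathlib, since removed). -/
noncomputable def Matrix.PosSemidef.sqrt {n : ℕ} {A : Matrix (Fin n) (Fin n) ℂ}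
    (hA : A.PosSemidef) : Matrix (Fin n) (Fin n) ℂ :=
  (hA.1.eigenvectorUnitary : Matrix (Fin n) (Fin n) ℂ) *
    diagonal ((↑) ∘ (Real.sqrt ·) ∘ hA.1.eigenvalues) *
    (star hA.1.eigenvectorUnitary : Matrix (Fin n) (Fin n) ℂ)
section Helpers
open Polynomial

lemma my_charpoly_zero (k : Type*) [Fintype k] [DecidableEq k] :
    (0 : Matrix k k ℂ).charpoly = X ^ (Fintype.card k) := by
  rw [Matrix.charpoly, charmatrix]
  simp [scalar_apply, det_diagonal]

lemma my_charpoly_conj {n : Type*} [Fintype n] [DecidableEq n]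
    (U A V : Matrix n n ℂ) (hUV : U * V = 1) :
    (U * A * V).charpoly = A.charpoly := by
  have key : (U * A * V).charmatrix =
      (C : ℂ →+* ℂ[X]).mapMatrix U * A.charmatrix * (C : ℂ →+* ℂ[X]).mapMatrix V := by
    have h2 : ∀ (Mx : Matrix n n ℂ[X]), Mx * Matrix.diagonal (fun _ => (X : ℂ[X])) =
        Matrix.diagonal (fun _ => (X : ℂ[X])) * Mx := fun Mx => by
      ext i j
      simp [mul_diagonal, diagonal_mul, mul_comm]
    simp only [charmatrix, mul_sub, sub_mul, scalar_apply]
    congr 1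
    · rw [h2, Matrix.mul_assoc, ← _root_.map_mul C.mapMatrix, hUV, _root_.map_one,
        Matrix.mul_one]
    · rw [← _root_.map_mul C.mapMatrix, ← _root_.map_mul C.mapMatrix]
  have hdet : U.det * V.det = 1 := by rw [← det_mul, hUV, det_one]
  rw [Matrix.charpoly, key, det_mul, det_mul, Matrix.charpoly, mul_comm, ← mul_assoc,
    ← RingHom.map_det, ← RingHom.map_det, ← _root_.map_mul, mul_comm V.det, hdet,
    _root_.map_one, one_mul]

lemma my_charpoly_mul_comm {m n : Type*} [Fintype m] [DecidableEq m] [Fintype n] [DecidableEq n]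
    (A : Matrix m n ℂ) (B : Matrix n m ℂ) :
    (A * B).charpoly * X ^ (Fintype.card n) = X ^ (Fintype.card m) * (B * A).charpoly := by
  have hU : (fromBlocks 1 A 0 1 : Matrix (m ⊕ n) (m ⊕ n) ℂ) * fromBlocks 1 (-A) 0 1 = 1 := by
    rw [fromBlocks_multiply]; simp [fromBlocks_one]
  have hM : (fromBlocks 1 A 0 1 : Matrix (m ⊕ n) (m ⊕ n) ℂ) * fromBlocks 0 0 B (B * A)
      * fromBlocks 1 (-A) 0 1 = fromBlocks (A * B) 0 B 0 := by
    rw [fromBlocks_multiply, fromBlocks_multiply]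
    congr 1 <;> simp [Matrix.mul_assoc]
  have h1 := my_charpoly_conj (fromBlocks 1 A 0 1) (fromBlocks 0 0 B (B * A))
    (fromBlocks 1 (-A) 0 1) hU
  rw [hM, charpoly_fromBlocks_zero₁₂, charpoly_fromBlocks_zero₁₂,
    my_charpoly_zero, my_charpoly_zero] at h1
  exact h1

lemma my_charpoly_hermitian {n : Type*} [Fintype n] [DecidableEq n]
    {A : Matrix n n ℂ} (hA : A.IsHermitian) :
    A.charpoly = ∏ i, (X - C (hA.eigenvalues i : ℂ)) := by
  have hU : (hA.eigenvectorUnitary : Matrix n n ℂ) * star (hA.eigenvectorUnitary : Matrix n n ℂ)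
      = 1 := (Matrix.mem_unitaryGroup_iff).mp hA.eigenvectorUnitary.2
  conv_lhs => rw [hA.spectral_theorem, Unitary.conjStarAlgAut_apply]
  rw [my_charpoly_conj _ _ _ hU, Matrix.charpoly, charmatrix, scalar_apply]
  have : (C : ℂ →+* ℂ[X]).mapMatrix (Matrix.diagonal (RCLike.ofReal ∘ hA.eigenvalues)) =
      Matrix.diagonal (fun i => C ((hA.eigenvalues i : ℂ))) := by
    rw [RingHom.mapMatrix_apply]
    exact Matrix.diagonal_map (by simp)
  rw [this, diagonal_sub, det_diagonal]

lemma my_roots_hermitian {n : Type*} [Fintype n] [DecidableEq n]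
    {A : Matrix n n ℂ} (hA : A.IsHermitian) :
    A.charpoly.roots = Finset.univ.val.map (fun i => (hA.eigenvalues i : ℂ)) := by
  have := roots_multiset_prod_X_sub_C (Finset.univ.val.map (fun i => (hA.eigenvalues i : ℂ)))
  rw [Multiset.map_map] at this
  rw [my_charpoly_hermitian hA, Finset.prod_eq_multiset_prod]
  exact this

/-- ν : padded monotone tuple -/
noncomputable def padFn {M N : ℕ} (hMN : N ≤ M) (g : Fin N → ℝ) (i : Fin M) : ℝ :=
  if h : (i : ℕ) < M - N then 0 else g ⟨(i : ℕ) - (M - N), by omega⟩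

lemma padFn_monotone {M N : ℕ} (hMN : N ≤ M) {g : Fin N → ℝ} (hg : Monotone g)
    (hg0 : ∀ i, 0 ≤ g i) : Monotone (padFn hMN g) := by
  intro i j hij
  unfold padFn
  rcases lt_or_ge (i : ℕ) (M - N) with hi | hi
  · rw [dif_pos hi]
    split_ifs with hj
    · exact le_refl 0
    · exact hg0 _
  · rw [dif_neg (by omega), dif_neg (by omega)]
    exact hg (by simp only [Fin.mk_le_mk]; exact Nat.sub_le_sub_right hij _)

lemma padFn_multiset {M N : ℕ} (hMN : N ≤ M) (g : Fin N → ℝ) :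
    Finset.univ.val.map (padFn hMN g) =
      Multiset.replicate (M - N) 0 + Finset.univ.val.map g := by
  rw [Fin.univ_val_map, Fin.univ_val_map]
  have hM : (M - N) + N = M := by omega
  rw [List.ofFn_congr hM.symm, List.ofFn_add]
  have h1 : (List.ofFn fun i : Fin (M - N) =>
      padFn hMN g (Fin.cast hM (Fin.castAdd N i))) = List.replicate (M - N) (0:ℝ) := by
    rw [← List.ofFn_const]
    congr 1
    funext i
    exact dif_pos (by simpa using i.2)
  have h2 : (List.ofFn fun j : Fin N =>
      padFn hMN g (Fin.cast hM (Fin.natAdd (M - N) j))) = List.ofFn g := by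
    congr 1
    funext j
    unfold padFn
    rw [dif_neg (by simp)]
    congr 1
    ext
    simp
  erw [h1, h2]
  rfl

/-- two monotone tuples with the same multiset are equal -/
lemma monotone_eq_of_multiset_eq {M : ℕ} {f g : Fin M → ℝ} (hf : Monotone f)
    (hg : Monotone g)
    (h : Finset.univ.val.map f = Finset.univ.val.map g) : f = g := by
  rw [Fin.univ_val_map, Fin.univ_val_map, Multiset.coe_eq_coe] at h
  have := List.Perm.eq_of_sortedLE (List.sortedLE_ofFn_iff.2 hf)
    (List.sortedLE_ofFn_iff.2 hg) h
  funext i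
  have h1 := List.getElem_ofFn (f := f) (i := (i : ℕ)) (by simp)
  have h2 := List.getElem_ofFn (f := g) (i := (i : ℕ)) (by simp)
  rw [← h1, ← h2]
  congr 1

lemma eig_multiset {M N : ℕ} (hMN : N ≤ M) (B : Matrix (Fin M) (Fin N) ℂ)
    (h₁ : (B * Bᴴ).IsHermitian) (h₂ : (Bᴴ * B).IsHermitian) :
    Finset.univ.val.map h₁.eigenvalues =
      Multiset.replicate (M - N) 0 + Finset.univ.val.map h₂.eigenvalues := by
  have hc := my_charpoly_mul_comm B Bᴴ
  simp only [Fintype.card_fin] at hc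
  have hroots := congrArg Polynomial.roots hc
  rw [roots_mul (mul_ne_zero (B * Bᴴ).charpoly_monic.ne_zero (pow_ne_zero _ X_ne_zero)),
    roots_mul (mul_ne_zero (pow_ne_zero _ X_ne_zero) (Bᴴ * B).charpoly_monic.ne_zero),
    roots_pow, roots_pow, roots_X, Multiset.nsmul_singleton, Multiset.nsmul_singleton,
    my_roots_hermitian h₁, my_roots_hermitian h₂] at hroots
  have hrepl : Multiset.replicate M (0:ℂ) =
      Multiset.replicate (M - N) 0 + Multiset.replicate N 0 := by
    rw [← Multiset.replicate_add]
    congr 1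
    omega
  rw [hrepl, add_assoc] at hroots
  have hC : Finset.univ.val.map (fun i => (h₁.eigenvalues i : ℂ)) =
      (Multiset.replicate (M - N) (0:ℂ)) +
        Finset.univ.val.map (fun i => (h₂.eigenvalues i : ℂ)) := by
    have := hroots
    -- hroots : map e₁ + repl N = repl (M-N) + (repl N + map e₂)
    rw [show Multiset.replicate (M-N) (0:ℂ) + (Multiset.replicate N (0:ℂ) +
        Finset.univ.val.map (fun i => (h₂.eigenvalues i : ℂ))) =
        (Multiset.replicate (M-N) (0:ℂ) + Finset.univ.val.map
          (fun i => (h₂.eigenvalues i : ℂ))) + Multiset.replicate N 0 by ac_rfl] at this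
    exact add_right_cancel this
  apply Multiset.map_injective (f := (Complex.ofReal : ℝ → ℂ)) Complex.ofReal_injective
  rw [Multiset.map_add, Multiset.map_map, Multiset.map_map, Multiset.map_replicate]
  simpa using hC

lemma eigDesc_mul_conjTranspose {M N : ℕ} (hMN : N ≤ M) (B : Matrix (Fin M) (Fin N) ℂ) :
    (∀ k : Fin M, ∀ h : (k : ℕ) < N, eigDesc (B * Bᴴ) k = eigDesc (Bᴴ * B) ⟨(k:ℕ), h⟩) ∧
      ∀ k : Fin M, N ≤ (k : ℕ) → eigDesc (B * Bᴴ) k = 0 := by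
  have h₁ : (B * Bᴴ).IsHermitian := (posSemidef_self_mul_conjTranspose B).1
  have h₂ : (Bᴴ * B).IsHermitian := (posSemidef_conjTranspose_mul_self B).1
  have hms : ∀ {n : ℕ} (e : Fin n → ℝ) (σ : Equiv.Perm (Fin n)),
      Finset.univ.val.map (e ∘ σ) = Finset.univ.val.map e := by
    intro n e σ
    rw [← Multiset.map_map e σ, Multiset.map_univ_val_equiv]
  have hg0 : ∀ i, 0 ≤ (h₂.eigenvalues ∘ Tuple.sort h₂.eigenvalues) i := fun i =>
    (posSemidef_conjTranspose_mul_self B).eigenvalues_nonneg _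
  have hkey : (h₁.eigenvalues ∘ Tuple.sort h₁.eigenvalues) =
      padFn hMN (h₂.eigenvalues ∘ Tuple.sort h₂.eigenvalues) := by
    apply monotone_eq_of_multiset_eq (Tuple.monotone_sort _)
      (padFn_monotone hMN (Tuple.monotone_sort _) hg0)
    rw [padFn_multiset, hms, hms]
    exact eig_multiset hMN B h₁ h₂
  constructor
  · intro k h
    rw [eigDesc, eigDesc, dif_pos h₁, dif_pos h₂, hkey]
    have hrev : ((k.rev : Fin M) : ℕ) = M - ((k : ℕ) + 1) := Fin.val_rev k
    rw [padFn, dif_neg (by omega)]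
    have hidx : (⟨((k.rev : Fin M) : ℕ) - (M - N), by omega⟩ : Fin N) =
        (⟨(k : ℕ), h⟩ : Fin N).rev := by
      apply Fin.ext
      simp only [Fin.val_rev]
      omega
    exact congrArg (h₂.eigenvalues ∘ Tuple.sort h₂.eigenvalues) hidx
  · intro k h
    rw [eigDesc, dif_pos h₁, hkey, padFn,
      dif_pos (by have := Fin.val_rev k; have := k.2; omega)]
lemma my_sqrt_herm {n : ℕ} {A : Matrix (Fin n) (Fin n) ℂ} (hA : A.PosSemidef) :
    hA.sqrtᴴ = hA.sqrt := by
  simp only [Matrix.PosSemidef.sqrt, star_eq_conjTranspose, conjTranspose_mul,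
    diagonal_conjTranspose, conjTranspose_conjTranspose, Matrix.mul_assoc]
  congr 3
  funext i
  simp
lemma my_sqrt_mul_self {n : ℕ} {A : Matrix (Fin n) (Fin n) ℂ} (hA : A.PosSemidef) :
    hA.sqrt * hA.sqrt = A := by
  have hU : (star hA.1.eigenvectorUnitary : Matrix (Fin n) (Fin n) ℂ) *
      (hA.1.eigenvectorUnitary : Matrix (Fin n) (Fin n) ℂ) = 1 :=
    (Matrix.mem_unitaryGroup_iff').mp hA.1.eigenvectorUnitary.2
  conv_rhs => rw [hA.1.spectral_theorem, Unitary.conjStarAlgAut_apply]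
  rw [Matrix.PosSemidef.sqrt, Matrix.mul_assoc, Matrix.mul_assoc, Matrix.mul_assoc,
    ← Matrix.mul_assoc (star _ : Matrix (Fin n) (Fin n) ℂ) _ (diagonal _ * _), hU, Matrix.one_mul,
    ← Matrix.mul_assoc (diagonal _) (diagonal _), diagonal_mul_diagonal, ← Matrix.mul_assoc]
  congr 3
  funext i
  simp only [Function.comp_apply]
  rw [← Complex.ofReal_mul, Real.mul_self_sqrt (hA.eigenvalues_nonneg i)]
  rfl
end Helpers

/-- The eigenvalues of `P_a^⊥ U_s W U_sᴴ` (computed through the Hermitian matrix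
`P_a^⊥ U_s W U_sᴴ P_a^⊥`, which has the same eigenvalues): the first `N` of them
agree with those of `W - (1/‖a‖²) W^{1/2} U_sᴴ a aᴴ U_s W^{1/2}`, the rest vanish. -/
theorem stmt14 {M N : ℕ} (hMN : N ≤ M)
    (Us : Matrix (Fin M) (Fin N) ℂ) (hUs : Usᴴ * Us = 1)
    (W : Matrix (Fin N) (Fin N) ℂ) (hW : W.PosSemidef)
    (a : Fin M → ℂ) (ha : a ≠ 0) :
    (∀ k : Fin M, ∀ h : (k : ℕ) < N,
        eigDesc (projPerp a * (Us * W * Usᴴ) * projPerp a) k =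
          eigDesc (W - (star a ⬝ᵥ a)⁻¹ •
            (hW.sqrt * Matrix.vecMulVec (Usᴴ *ᵥ a) (star (Usᴴ *ᵥ a)) * hW.sqrt))
            ⟨(k : ℕ), h⟩) ∧
      ∀ k : Fin M, N ≤ (k : ℕ) →
        eigDesc (projPerp a * (Us * W * Usᴴ) * projPerp a) k = 0 := by
  have hsa : star a ⬝ᵥ a ≠ 0 := fun h => ha (dotProduct_star_self_eq_zero.mp h)
  have hsqH : hW.sqrtᴴ = hW.sqrt := my_sqrt_herm hW
  have hsq : hW.sqrt * hW.sqrt = W := my_sqrt_mul_self hW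
  have hcstar : star (star a ⬝ᵥ a)⁻¹ = (star a ⬝ᵥ a)⁻¹ := by
    have h1 : star (star a ⬝ᵥ a) = star a ⬝ᵥ a := by
      simp only [dotProduct, star_sum, star_mul', star_star, Pi.star_apply]
      exact Finset.sum_congr rfl fun k _ => mul_comm _ _
    rw [star_inv₀, h1]
  have hQH : (Matrix.vecMulVec a (star a))ᴴ = Matrix.vecMulVec a (star a) := by
    ext i j
    simp only [conjTranspose_apply, vecMulVec_apply, Pi.star_apply, star_mul', star_star]
    ring
  have hPH : (projPerp a)ᴴ = projPerp a := by
    rw [projPerp, conjTranspose_sub, conjTranspose_one, conjTranspose_smul, hcstar, hQH]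
  have hQQ : Matrix.vecMulVec a (star a) * Matrix.vecMulVec a (star a) =
      (star a ⬝ᵥ a) • Matrix.vecMulVec a (star a) := by
    ext i j
    simp only [Matrix.mul_apply, vecMulVec_apply, Matrix.smul_apply, dotProduct,
      smul_eq_mul, Finset.sum_mul, Finset.mul_sum]
    apply Finset.sum_congr rfl
    intro k _
    ring
  have hccs : (star a ⬝ᵥ a)⁻¹ * (star a ⬝ᵥ a)⁻¹ * (star a ⬝ᵥ a) = (star a ⬝ᵥ a)⁻¹ := by
    field_simp
  have hPP : projPerp a * projPerp a = projPerp a := by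
    rw [projPerp, sub_mul, one_mul, mul_sub, mul_one, smul_mul_assoc, mul_smul_comm, hQQ,
      smul_smul, smul_smul, hccs, sub_self, sub_zero]
  set B : Matrix (Fin M) (Fin N) ℂ := projPerp a * Us * hW.sqrt with hB
  have hBH : Bᴴ = hW.sqrt * (Usᴴ * projPerp a) := by
    rw [hB, conjTranspose_mul, conjTranspose_mul, hsqH, hPH]
  have hBBH : projPerp a * (Us * W * Usᴴ) * projPerp a = B * Bᴴ := by
    rw [hBH, hB]
    conv_lhs => rw [← hsq]
    simp only [Matrix.mul_assoc]
  have hQ' : Matrix.vecMulVec (Usᴴ *ᵥ a) (star (Usᴴ *ᵥ a)) =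
      Usᴴ * (Matrix.vecMulVec a (star a) * Us) := by
    rw [vecMulVec_eq Unit, vecMulVec_eq Unit, star_mulVec, conjTranspose_conjTranspose,
      replicateCol_mulVec, replicateRow_vecMul]
    simp only [Matrix.mul_assoc]
  have hBHB : W - (star a ⬝ᵥ a)⁻¹ •
      (hW.sqrt * Matrix.vecMulVec (Usᴴ *ᵥ a) (star (Usᴴ *ᵥ a)) * hW.sqrt) = Bᴴ * B := by
    have h2 : Bᴴ * B = hW.sqrt * (Usᴴ * (projPerp a * (Us * hW.sqrt))) := by
      rw [hBH, hB]
      simp only [Matrix.mul_assoc, ← Matrix.mul_assoc (projPerp a) (projPerp a), hPP]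
    rw [h2, projPerp, Matrix.sub_mul, Matrix.one_mul, Matrix.mul_sub, Matrix.mul_sub]
    congr 1
    · rw [show Usᴴ * (Us * hW.sqrt) = Usᴴ * Us * hW.sqrt from (Matrix.mul_assoc _ _ _).symm,
        hUs, Matrix.one_mul, hsq]
    · rw [hQ']
      simp only [Matrix.mul_assoc]
      rw [Matrix.smul_mul, Matrix.mul_smul, Matrix.mul_smul]
  have hmain := eigDesc_mul_conjTranspose hMN B
  rw [hBBH, hBHB]
  exact hmain
end
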